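/- arXiv:1511.09194 — 4 statements merged into one kernel-verified Lean document; each statement's English description precedes it below -/
import Mathlib

section
/- Let T be a self-similar interval exchange map with primitive associated substitution σ and matrix M, let β be an eigenvalue of M with |β| > 1 such that β/|β| is not a root of unity, and let γ be an eigenvector of M for β. Then there exists a minimal sequence for γ, i.e. a sequence ω ∈ Ω_σ with Re(γ_n(ω)) ≥ 0 for all n ∈ ℤ. -/
open Complex MeasureTheory Filter Set
open scoped BigOperators

noncomputable section

namespace IEMWandering

/-- The half-open unit interval `[0,1)`. -/
def unitIvl : Set ℝ := Set.Ico (0:ℝ) 1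

/-- An interval exchange map on `[0,1)`: a bijection of `[0,1)` that is a translation
on each member of a finite partition of `[0,1)` into half-open intervals. -/
structure IEM (A : Type) [Fintype A] where
  T : ℝ → ℝ
  I : A → Set ℝ
  δ : A → ℝ
  isIco : ∀ a, ∃ l u : ℝ, l < u ∧ I a = Set.Ico l u
  subset_unit : ∀ a, I a ⊆ unitIvl
  partition : ∀ t ∈ unitIvl, ∃! a, t ∈ I a
  translate : ∀ a, ∀ t ∈ I a, T t = t + δ a
  bijOn : Set.BijOn T unitIvl unitIvl

/-- `substIter σ n a = σⁿ(a)`. -/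
def substIter {A : Type} (σ : A → List A) : ℕ → A → List A
  | 0, a => [a]
  | n+1, a => ((σ a).map (substIter σ n)).flatten

/-- Applying a substitution to a word. -/
def substW {A : Type} (σ : A → List A) (w : List A) : List A := (w.map σ).flatten

/-- `substIterW σ k w = σᵏ(w)`. -/
def substIterW {A : Type} (σ : A → List A) (k : ℕ) (w : List A) : List A :=
  (substW σ)^[k] w

/-- A substitution is primitive if some power of it maps every letter to a word
containing every letter. -/
def Primitive {A : Type} (σ : A → List A) : Prop :=
  ∃ n : ℕ, ∀ a b : A, a ∈ substIter σ n b

/-- The matrix `M` of a substitution: `M a b` = number of occurrences of `b` in `σ a`. -/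
def substMatrix {A : Type} [Fintype A] [DecidableEq A] (σ : A → List A) :
    Matrix A A ℂ := fun a b => ((σ a).count b : ℂ)

/-- `γ(w) = γ_{w_0} + … + γ_{w_{n-1}}`. -/
def wordSum {A : Type} (γ : A → ℂ) (w : List A) : ℂ := (w.map γ).sum

/-- `γ` is an eigenvector of the substitution matrix for the eigenvalue `β`. -/
def IsEigenvector {A : Type} [Fintype A] [DecidableEq A] (σ : A → List A) (β : ℂ)
    (γ : A → ℂ) : Prop :=
  γ ≠ 0 ∧ (substMatrix σ).mulVec γ = β • γ

/-- `z` is not a root of unity. -/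
def NotRootOfUnity (z : ℂ) : Prop := ∀ n : ℕ, 0 < n → z ^ n ≠ 1

/-- `β/|β|`. -/
def unitDir (β : ℂ) : ℂ := β / (‖β‖ : ℂ)

/-- A self-similar interval exchange map, together with its renormalization ratio `α`
and its associated substitution `σ`: the first-return map of `T` to `[0,α)`, rescaled
by `α⁻¹`, equals `T`; `(σ a).length` is the first return time `r_a` of `α I_a` to
`[0,α)` and `T^[m] (α I_a) ⊆ I_{(σ a)_m}` for `m < r_a`. -/
structure SelfSimilarIEM (A : Type) [Fintype A] extends IEM A where
  α : ℝ
  α_pos : 0 < α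
  α_lt_one : α < 1
  σ : A → List A
  σ_ne : ∀ a, σ a ≠ []
  visits : ∀ a, ∀ t ∈ I a, ∀ (m : ℕ) (h : m < (σ a).length),
    T^[m] (α * t) ∈ I ((σ a).get ⟨m, h⟩)
  not_first_return : ∀ a, ∀ t ∈ I a, ∀ k : ℕ, 0 < k → k < (σ a).length →
    T^[k] (α * t) ∉ Set.Ico (0:ℝ) α
  self_similar : ∀ a, ∀ t ∈ I a, T^[(σ a).length] (α * t) = α * T t

/-- An affine interval exchange map on `[0,1)` with positive slopes. -/
structure AffineIEM (A : Type) [Fintype A] where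
  f : ℝ → ℝ
  J : A → Set ℝ
  slope : A → ℝ
  intercept : A → ℝ
  slope_pos : ∀ a, 0 < slope a
  isIco : ∀ a, ∃ l u : ℝ, l < u ∧ J a = Set.Ico l u
  subset_unit : ∀ a, J a ⊆ unitIvl
  partition : ∀ t ∈ unitIvl, ∃! a, t ∈ J a
  affine : ∀ a, ∀ t ∈ J a, f t = slope a * t + intercept a
  bijOn : Set.BijOn f unitIvl unitIvl

/-- `h` realizes a semi-conjugacy from `f` to `T`:
it is continuous, surjective, nondecreasing and `h ∘ f = T ∘ h` on `[0,1)`. -/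
def SemiConjWith (T f h : ℝ → ℝ) : Prop :=
  ContinuousOn h unitIvl ∧ Set.SurjOn h unitIvl unitIvl ∧ MonotoneOn h unitIvl ∧
    Set.MapsTo h unitIvl unitIvl ∧ ∀ t ∈ unitIvl, h (f t) = T (h t)

/-- `f` is semi-conjugate with `T`. -/
def SemiConjugate (T f : ℝ → ℝ) : Prop := ∃ h, SemiConjWith T f h

/-- `f` has a wandering interval: a nondegenerate interval whose forward iterates
are pairwise disjoint. -/
def HasWanderingInterval (f : ℝ → ℝ) : Prop :=
  ∃ u v : ℝ, u < v ∧ Set.Ico u v ⊆ unitIvl ∧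
    ∀ m n : ℕ, m ≠ n → Disjoint (f^[m] '' Set.Ico u v) (f^[n] '' Set.Ico u v)

/-- Membership in the substitution subshift `Ω_σ`: every finite subword of `ω`
occurs in some `σⁿ(a)`. -/
def InOmega {A : Type} (σ : A → List A) (ω : ℤ → A) : Prop :=
  ∀ (m : ℤ) (len : ℕ), ∃ (n : ℕ) (a : A),
    (List.ofFn fun i : Fin len => ω (m + (i.val : ℤ))) <:+: substIter σ n a

/-- The word `ω_n … ω_m`. -/
def segment {A : Type} (ω : ℤ → A) (n m : ℤ) : List A :=
  List.ofFn fun i : Fin (m - n + 1).toNat => ω (n + (i.val : ℤ))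

/-- `γ_n(ω)`: the Birkhoff-like sums of `γ` along `ω`. -/
def gammaZ {A : Type} (γ : A → ℂ) (ω : ℤ → A) (n : ℤ) : ℂ :=
  if 0 ≤ n then ∑ i ∈ Finset.range n.toNat, γ (ω (i : ℤ))
  else -∑ i ∈ Finset.range (-n).toNat, γ (ω (n + (i : ℤ)))

/-- `ω` is a minimal sequence for `γ`. -/
def MinimalSeq {A : Type} (σ : A → List A) (γ : A → ℂ) (ω : ℤ → A) : Prop :=
  InOmega σ ω ∧ ∀ n : ℤ, 0 ≤ (gammaZ γ ω n).re

/-- Triples `(p, c, s)` of a prefix, a central letter and a suffix. -/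
abbrev Triple (A : Type) := List A × A × List A

/-- The set `𝒮_a` of reversed prefix-suffix expansions at `a` (indexed from `0`,
so `x m` is the triple `(p_{m+1}, c_{m+1}, s_{m+1})`). -/
def InS {A : Type} (σ : A → List A) (a : A) (x : ℕ → Triple A) : Prop :=
  σ a = (x 0).1 ++ (x 0).2.1 :: (x 0).2.2 ∧
  ∀ m : ℕ, σ ((x m).2.1) = (x (m+1)).1 ++ (x (m+1)).2.1 :: (x (m+1)).2.2

/-- `z_a(x) = Σ_{m≥1} β^{-m} γ(p_m)`. -/
def zrep {A : Type} (β : ℂ) (γ : A → ℂ) (x : ℕ → Triple A) : ℂ :=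
  ∑' m : ℕ, β⁻¹ ^ (m + 1) * wordSum γ (x m).1

/-- `z_a^{(n)}(x) = Σ_{m=1}^n β^{-m} γ(p_m)`. -/
def zrepN {A : Type} (β : ℂ) (γ : A → ℂ) (n : ℕ) (x : ℕ → Triple A) : ℂ :=
  ∑ m ∈ Finset.range n, β⁻¹ ^ (m + 1) * wordSum γ (x m).1

/-- The fractal `𝔉_a`. -/
def Frac {A : Type} (σ : A → List A) (β : ℂ) (γ : A → ℂ) (a : A) : Set ℂ :=
  { z | ∃ x, InS σ a x ∧ zrep β γ x = z }

/-- The finite approximation `𝔉_a^{(n)}`. -/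
def FracN {A : Type} (σ : A → List A) (β : ℂ) (γ : A → ℂ) (n : ℕ) (a : A) : Set ℂ :=
  { z | ∃ x, InS σ a x ∧ zrepN β γ n x = z }

/-- `v_a(τ) = min_{z ∈ 𝔉_a} Re(τ z)`. -/
def vDir {A : Type} (σ : A → List A) (β : ℂ) (γ : A → ℂ) (a : A) (τ : ℂ) : ℝ :=
  sInf ((fun z => (τ * z).re) '' Frac σ β γ a)

/-- `v_a^{(n)}(τ) = min_{z ∈ 𝔉_a^{(n)}} Re(τ z)`. -/
def vDirN {A : Type} (σ : A → List A) (β : ℂ) (γ : A → ℂ) (n : ℕ) (a : A) (τ : ℂ) : ℝ :=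
  sInf ((fun z => (τ * z).re) '' FracN σ β γ n a)

/-- The set `E_a(τ)` of extreme points of `𝔉_a` in direction `τ`. -/
def ExtPts {A : Type} (σ : A → List A) (β : ℂ) (γ : A → ℂ) (a : A) (τ : ℂ) : Set ℂ :=
  { z ∈ Frac σ β γ a | (τ * z).re = vDir σ β γ a τ }

/-- The set `E_a^{(n)}(τ)`. -/
def ExtPtsN {A : Type} (σ : A → List A) (β : ℂ) (γ : A → ℂ) (n : ℕ) (a : A) (τ : ℂ) : Set ℂ :=
  { z ∈ FracN σ β γ n a | (τ * z).re = vDirN σ β γ n a τ }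

/-- The unique representation property: every extreme point of every fractal `𝔉_a`
has a unique representation in `𝒮_a`. -/
def URP {A : Type} (σ : A → List A) (β : ℂ) (γ : A → ℂ) : Prop :=
  ∀ (a : A) (τ : ℂ), ‖τ‖ = 1 →
    ∀ z ∈ ExtPts σ β γ a τ, ∀ x y : ℕ → Triple A,
      InS σ a x → zrep β γ x = z → InS σ a y → zrep β γ y = z → x = y

/-- `(p,c,s)` is a decomposition of `σ(a)`. -/
def IsDecomp {A : Type} (σ : A → List A) (a : A) (d : Triple A) : Prop :=
  σ a = d.1 ++ d.2.1 :: d.2.2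

/-- The subfractal `𝔉_{a,(p,c,s)}`: values of representations starting with `(p,c,s)`. -/
def FracDec {A : Type} (σ : A → List A) (β : ℂ) (γ : A → ℂ) (a : A) (d : Triple A) :
    Set ℂ := { z | ∃ x, InS σ a x ∧ x 0 = d ∧ zrep β γ x = z }

/-- `v_{a,(p,c,s)}(τ)`. -/
def vDec {A : Type} (σ : A → List A) (β : ℂ) (γ : A → ℂ) (a : A) (d : Triple A)
    (τ : ℂ) : ℝ := sInf ((fun z => (τ * z).re) '' FracDec σ β γ a d)

/-- `E_{a,(p,c,s)}(τ) = E_a(τ) ∩ 𝔉_{a,(p,c,s)}`. -/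
def EDec {A : Type} (σ : A → List A) (β : ℂ) (γ : A → ℂ) (a : A) (d : Triple A)
    (τ : ℂ) : Set ℂ := ExtPts σ β γ a τ ∩ FracDec σ β γ a d

/-- The set `Ψ_a` of directions with extreme points in two distinct subfractals. -/
def Psi {A : Type} (σ : A → List A) (β : ℂ) (γ : A → ℂ) (a : A) : Set ℂ :=
  { τ | ‖τ‖ = 1 ∧ ∃ d d' : Triple A, d ≠ d' ∧
      IsDecomp σ a d ∧ IsDecomp σ a d' ∧
      EDec σ β γ a d τ ≠ EDec σ β γ a d' τ ∧
      vDir σ β γ a τ = vDec σ β γ a d τ ∧ vDir σ β γ a τ = vDec σ β γ a d' τ }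

/-- The natural (arc) distance between two points of the unit circle. -/
def arcDist (τ τ' : ℂ) : ℝ := |Complex.arg (τ / τ')|

/-- A good eigenvector: directions in `Ψ(γ)` are badly approximated by the
orbit of `β₀ = β/|β|`. -/
def GoodEigenvector {A : Type} [Fintype A] [DecidableEq A] (σ : A → List A) (β : ℂ)
    (γ : A → ℂ) : Prop :=
  ∀ C : ℝ, 1 < C → ∀ τ ∈ ⋃ a : A, Psi σ β γ a,
    0 < Filter.liminf
      (fun n : ℕ => ((C ^ n * arcDist τ ((unitDir β) ^ n) : ℝ) : EReal)) Filter.atTop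

/-- The left shift on sequences of triples. -/
def shiftS {A : Type} (x : ℕ → Triple A) : ℕ → Triple A := fun m => x (m + 1)

/-- The set `E_a^*(τ)` of limit extreme points. -/
def LimitExt {A : Type} (σ : A → List A) (β : ℂ) (γ : A → ℂ) (a : A) (τ : ℂ) :
    Set ℂ :=
  { z | z ∈ ExtPts σ β γ a τ ∧ ∃ x, InS σ a x ∧ zrep β γ x = z ∧
      ∀ j : ℕ, 0 < j → ∃ (aj : A) (y : ℕ → Triple A), InS σ aj y ∧
        zrep β γ y ∈ ExtPts σ β γ aj ((unitDir β) ^ j * τ) ∧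
        (y (j - 1)).2.1 = a ∧ (fun m => y (m + j)) = x }

/-- Minimality of an i.e.m.: every (forward) orbit is dense in `[0,1)`. -/
def MinimalIEM {A : Type} [Fintype A] (T : IEM A) : Prop :=
  ∀ t ∈ unitIvl, ∀ s ∈ unitIvl, ∀ ε : ℝ, 0 < ε → ∃ n : ℕ, |T.T^[n] t - s| < ε

/-- `ω` is the itinerary of a full (two-sided) orbit of `T`. -/
def IsItinerary {A : Type} [Fintype A] (T : IEM A) (ω : ℤ → A) : Prop :=
  ∃ o : ℤ → ℝ, (∀ n, o n ∈ unitIvl) ∧ (∀ n, T.T (o n) = o (n + 1)) ∧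
    ∀ n, o n ∈ T.I (ω n)

/-- Membership in `Ω_T`, the closure (in the product topology) of the set of
itineraries of points of `[0,1)` under `T`. -/
def InOmegaT {A : Type} [Fintype A] (T : IEM A) (ω : ℤ → A) : Prop :=
  ∀ N : ℕ, ∃ ω', IsItinerary T ω' ∧ ∀ n : ℤ, |n| ≤ (N : ℤ) → ω' n = ω n

/-- The orientation-preserving exchange of the two halves of `[t₀, t₁)`. -/
def halfExchange (t₀ t₁ t : ℝ) : ℝ :=
  if t₀ ≤ t ∧ t < (t₀ + t₁) / 2 then t + (t₁ - t₀) / 2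
  else if (t₀ + t₁) / 2 ≤ t ∧ t < t₁ then t - (t₁ - t₀) / 2
  else t

/-- The cubic Arnoux–Yoccoz interval exchange map. -/
def AYmap (α : ℝ) : ℝ → ℝ := fun t =>
  halfExchange 0 1 (halfExchange 0 α (halfExchange α (α + α^2)
    (halfExchange (α + α^2) 1 t)))

/-- The cubic Arnoux–Yoccoz substitution on `{1, …, 9}` (letters `0`-indexed):
`σ(1)=35, σ(2)=45, σ(3)=46, σ(4)=17, σ(5)=18, σ(6)=19, σ(7)=29, σ(8)=2, σ(9)=3`. -/
def AYsub : Fin 9 → List (Fin 9) :=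
  ![[2,4],[3,4],[3,5],[0,6],[0,7],[0,8],[1,8],[1],[2]]

/-- The eigenvector of the Arnoux–Yoccoz matrix for the eigenvalue `β`. -/
def AYvec (β : ℂ) : Fin 9 → ℂ :=
  ![β^2+β+1, -β, -β, -β^2-β-1, β+1, β+1, -β^2-β-2, -1, -1]

end IEMWandering

section MinSeqAux
set_option linter.unusedSectionVars false

open IEMWandering List

variable {A : Type}

/-! ### Combinatorial lemmas about substitutions -/

lemma substW_nil (σ : A → List A) : substW σ [] = [] := rfl

lemma substW_cons (σ : A → List A) (a : A) (w : List A) :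
    substW σ (a :: w) = σ a ++ substW σ w := by
  simp [substW]

lemma substW_append (σ : A → List A) (u v : List A) :
    substW σ (u ++ v) = substW σ u ++ substW σ v := by
  simp [substW]

lemma substIter_succ (σ : A → List A) (n : ℕ) (a : A) :
    substIter σ (n+1) a = ((σ a).map (substIter σ n)).flatten := rfl

lemma substIter_one (σ : A → List A) (a : A) : substIter σ 1 a = σ a := by
  rw [substIter_succ]
  have : ∀ w : List A, (w.map (substIter σ 0)).flatten = w := by
    intro w; induction w with
    | nil => rfl
    | cons b w ih => simp only [List.map_cons, List.flatten_cons, ih]; rfl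
  exact this (σ a)

lemma substIter_succ_eq_substW (σ : A → List A) :
    ∀ (n : ℕ) (a : A), substIter σ (n+1) a = substW σ (substIter σ n a) := by
  intro n
  induction n with
  | zero =>
    intro a; rw [substIter_one]; simp [substIter, substW]
  | succ n ih =>
    intro a
    rw [substIter_succ, substIter_succ]
    have : (σ a).map (substIter σ (n+1)) = (σ a).map (fun b => substW σ (substIter σ n b)) :=
      List.map_congr_left (fun b _ => ih b)
    rw [this]
    simp only [substW, List.map_flatten, List.flatten_flatten, List.map_map]
    rfl

lemma substIterW_substIter (σ : A → List A) :
    ∀ (m j : ℕ) (a : A), substIterW σ m (substIter σ j a) = substIter σ (m + j) a := by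
  intro m
  induction m with
  | zero => intro j a; simp [substIterW]
  | succ m ih =>
    intro j a
    have : substIterW σ (m+1) (substIter σ j a)
        = substW σ (substIterW σ m (substIter σ j a)) := by
      simp [substIterW, Function.iterate_succ_apply']
    rw [this, ih, ← substIter_succ_eq_substW]
    congr 1
    omega

lemma substW_prefix (σ : A → List A) {q w : List A} (h : q <+: w) :
    substW σ q <+: substW σ w := by
  obtain ⟨t, rfl⟩ := h
  rw [substW_append]
  exact ⟨substW σ t, rfl⟩

lemma substIterW_prefix (σ : A → List A) (m : ℕ) {q w : List A} (h : q <+: w) :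
    substIterW σ m q <+: substIterW σ m w := by
  induction m with
  | zero => exact h
  | succ m ih =>
    have h1 : substIterW σ (m+1) q = substW σ (substIterW σ m q) := by
      simp [substIterW, Function.iterate_succ_apply']
    have h2 : substIterW σ (m+1) w = substW σ (substIterW σ m w) := by
      simp [substIterW, Function.iterate_succ_apply']
    rw [h1, h2]
    exact substW_prefix σ ih

lemma substIter_ne_nil {σ : A → List A} (hσ : ∀ a, σ a ≠ []) :
    ∀ (n : ℕ) (a : A), substIter σ n a ≠ [] := by
  intro n
  induction n with
  | zero => intro a; simp [substIter]
  | succ n ih =>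
    intro a
    rw [substIter_succ]
    obtain ⟨c, tl, hc⟩ := List.exists_cons_of_ne_nil (hσ a)
    rw [hc]
    simp only [List.map_cons, List.flatten_cons, ne_eq, List.append_eq_nil_iff]
    intro ⟨h1, _⟩
    exact ih c h1

lemma substIter_add (σ : A → List A) (j : ℕ) :
    ∀ (k : ℕ) (a : A),
      substIter σ (j + k) a = ((substIter σ k a).map (substIter σ j)).flatten := by
  intro k
  induction k with
  | zero => intro a; simp [substIter]
  | succ k ih =>
    intro a
    have hj : j + (k + 1) = (j + k) + 1 := by omega
    rw [hj, substIter_succ]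
    have : (σ a).map (substIter σ (j + k))
        = (σ a).map (fun b => ((substIter σ k b).map (substIter σ j)).flatten) :=
      List.map_congr_left (fun b _ => ih b)
    rw [this, substIter_succ]
    simp [List.map_flatten, List.flatten_flatten, List.map_map, Function.comp_def]

lemma mem_substIter_of_le {σ : A → List A} (hσ : ∀ a, σ a ≠ [])
    {n₀ : ℕ} (hprim : ∀ a b : A, a ∈ substIter σ n₀ b) (a₀ : A) :
    ∀ j, n₀ ≤ j → ∀ c : A, c ∈ substIter σ j a₀ := by
  intro j hj c
  obtain ⟨k, rfl⟩ : ∃ k, j = n₀ + k := ⟨j - n₀, by omega⟩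
  rw [substIter_add]
  rw [List.mem_flatten]
  obtain ⟨b, tl, hb⟩ := List.exists_cons_of_ne_nil (substIter_ne_nil hσ k a₀)
  exact ⟨substIter σ n₀ b, by rw [hb]; simp, hprim c b⟩


/-! ### wordSum lemmas -/

lemma wordSum_nil (γ : A → ℂ) : wordSum γ [] = 0 := rfl

lemma wordSum_cons (γ : A → ℂ) (a : A) (w : List A) :
    wordSum γ (a :: w) = γ a + wordSum γ w := by simp [wordSum]

lemma wordSum_append (γ : A → ℂ) (u v : List A) :
    wordSum γ (u ++ v) = wordSum γ u + wordSum γ v := by simp [wordSum]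

lemma wordSum_count [Fintype A] [DecidableEq A] (γ : A → ℂ) (l : List A) :
    wordSum γ l = ∑ b : A, (l.count b : ℂ) * γ b := by
  induction l with
  | nil => simp [wordSum]
  | cons a l ih =>
    rw [wordSum_cons, ih]
    have : ∀ b : A, (((a :: l).count b : ℂ)) * γ b
        = (l.count b : ℂ) * γ b + (if b = a then γ b else 0) := by
      intro b
      rw [List.count_cons]
      by_cases hb : b = a
      · subst hb; push_cast; simp; ring
      · rw [if_neg (by simp [beq_iff_eq]; exact fun h => hb h.symm), if_neg hb]
        push_cast; ring
    rw [Finset.sum_congr rfl (fun b _ => this b), Finset.sum_add_distrib,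
      Finset.sum_ite_eq' Finset.univ a γ]
    simp [add_comm]

variable [Fintype A] [DecidableEq A] {σ : A → List A} {β : ℂ} {γ : A → ℂ}

lemma wordSum_sigma (hγ : IsEigenvector σ β γ) (a : A) :
    wordSum γ (σ a) = β * γ a := by
  have := congrFun hγ.2 a
  rw [Matrix.mulVec, Pi.smul_apply, smul_eq_mul] at this
  rw [wordSum_count]
  exact this

lemma wordSum_substW (hγ : IsEigenvector σ β γ) (w : List A) :
    wordSum γ (substW σ w) = β * wordSum γ w := by
  induction w with
  | nil => simp [substW_nil, wordSum_nil]
  | cons a w ih =>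
    rw [substW_cons, wordSum_append, wordSum_cons, ih, wordSum_sigma hγ]
    ring

lemma wordSum_substIterW (hγ : IsEigenvector σ β γ) (m : ℕ) (w : List A) :
    wordSum γ (substIterW σ m w) = β ^ m * wordSum γ w := by
  induction m with
  | zero => simp [substIterW]
  | succ m ih =>
    have : substIterW σ (m+1) w = substW σ (substIterW σ m w) := by
      simp [substIterW, Function.iterate_succ_apply']
    rw [this, wordSum_substW hγ, ih]
    ring

lemma wordSum_substIter (hγ : IsEigenvector σ β γ) (n : ℕ) (a : A) :
    wordSum γ (substIter σ n a) = β ^ n * γ a := by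
  have h := wordSum_substIterW hγ n [a]
  have h2 : substIterW σ n [a] = substIter σ n a := by
    have := substIterW_substIter σ n 0 a
    simpa [substIter] using this
  rw [h2] at h
  rw [h]
  simp [wordSum_cons, wordSum_nil]

lemma abs_wordSum_le (γ : A → ℂ) (l : List A) :
    ‖wordSum γ l‖ ≤ l.length * (∑ b : A, ‖γ b‖) := by
  induction l with
  | nil => simp [wordSum_nil]
  | cons a l ih =>
    rw [wordSum_cons]
    calc ‖γ a + wordSum γ l‖
        ≤ ‖γ a‖ + ‖wordSum γ l‖ := norm_add_le _ _
      _ ≤ (∑ b : A, ‖γ b‖) + l.length * (∑ b : A, ‖γ b‖) := by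
          gcongr
          exact Finset.single_le_sum (fun b _ => norm_nonneg (γ b)) (Finset.mem_univ a)
      _ = (a :: l).length * (∑ b : A, ‖γ b‖) := by
          simp [List.length_cons]; ring

/-! ### Partial sums of lists -/

lemma sum_range_getD (γ : A → ℂ) (a₀ : A) (l : List A) :
    ∀ n : ℕ, n ≤ l.length →
      ∑ i ∈ Finset.range n, γ (l.getD i a₀) = wordSum γ (l.take n) := by
  intro n
  induction n with
  | zero => simp [wordSum_nil]
  | succ n ih =>
    intro hn
    rw [Finset.sum_range_succ, ih (by omega)]
    have hlt : n < l.length := by omega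
    rw [List.take_succ]
    rw [List.getD_eq_getElem l a₀ hlt]
    have : l[n]? = some l[n] := List.getElem?_eq_getElem hlt
    rw [this]
    rw [wordSum_append]
    congr 1
    simp [wordSum_cons, wordSum_nil]

lemma getD_drop (a₀ : A) (l : List A) (j i : ℕ) :
    (l.drop j).getD i a₀ = l.getD (j + i) a₀ := by
  rcases lt_or_ge i (l.drop j).length with h | h
  · rw [List.getD_eq_getElem _ a₀ h]
    have hlen : j + i < l.length := by
      rw [List.length_drop] at h; omega
    rw [List.getD_eq_getElem l a₀ hlen]
    rw [List.getElem_drop]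
  · rw [List.getD_eq_default _ a₀ h]
    rw [List.length_drop] at h
    rw [List.getD_eq_default _ a₀ (by omega)]

lemma sum_range_getD_drop (γ : A → ℂ) (a₀ : A) (l : List A) (j n : ℕ)
    (h : j + n ≤ l.length) :
    ∑ i ∈ Finset.range n, γ (l.getD (j + i) a₀) = wordSum γ ((l.drop j).take n) := by
  rw [← sum_range_getD γ a₀ (l.drop j) n (by rw [List.length_drop]; omega)]
  exact Finset.sum_congr rfl (fun i _ => by rw [getD_drop])

lemma take_add_wordSum (γ : A → ℂ) (l : List A) (j n : ℕ) :
    wordSum γ (l.take (j + n)) = wordSum γ (l.take j) + wordSum γ ((l.drop j).take n) := by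
  rw [List.take_add, wordSum_append]


/-! ### Density of powers of a non-root-of-unity on the circle -/

omit [Fintype A] [DecidableEq A]

lemma zpowers_dense {β₀ : ℂ} (hβ₀ : ‖β₀‖ = 1)
    (hru : ∀ n : ℕ, 0 < n → β₀ ^ n ≠ 1) :
    ∀ u : ℂ, ‖u‖ = 1 → u ∈ closure (Set.range fun m : ℤ => β₀ ^ m) := by
  intro u hu
  set θ : ℝ := Complex.arg β₀ with hθ
  -- the subgroup generated by θ and 2π
  set G : AddSubgroup ℝ := AddSubgroup.closure {θ, 2 * Real.pi} with hG
  have hβ₀exp : Complex.exp (θ * Complex.I) = β₀ := by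
    have := Complex.norm_mul_exp_arg_mul_I β₀
    rwa [hβ₀, Complex.ofReal_one, one_mul] at this
  -- every element of G maps into the range of zpowers under x ↦ exp(x I)
  have hGmap : ∀ x ∈ G, ∃ m : ℤ, Complex.exp (x * Complex.I) = β₀ ^ m := by
    have hβne : β₀ ≠ 0 := by
      intro h0; rw [h0] at hβ₀; simp at hβ₀
    intro x hx
    rw [hG] at hx
    induction hx using AddSubgroup.closure_induction with
    | mem y hy =>
      rcases hy with rfl | hy
      · exact ⟨1, by rw [hβ₀exp]; simp⟩
      · rcases hy with rfl
        refine ⟨0, ?_⟩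
        rw [zpow_zero]
        have : ((2 * Real.pi : ℝ) : ℂ) * Complex.I = 2 * Real.pi * Complex.I := by
          push_cast; ring
        rw [this]
        exact Complex.exp_two_pi_mul_I
    | zero => exact ⟨0, by simp⟩
    | add y w hy hw ihy ihw =>
      obtain ⟨m, hm⟩ := ihy
      obtain ⟨k, hk⟩ := ihw
      refine ⟨m + k, ?_⟩
      push_cast
      rw [add_mul, Complex.exp_add, hm, hk, zpow_add₀ hβne]
    | neg y hy ihy =>
      obtain ⟨m, hm⟩ := ihy
      refine ⟨-m, ?_⟩
      push_cast
      rw [neg_mul, Complex.exp_neg, hm, zpow_neg]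
  -- G is dense
  have hdense : Dense (G : Set ℝ) := by
    rcases AddSubgroup.dense_or_cyclic G with h | ⟨g, hg⟩
    · exact h
    · exfalso
      have hθG : θ ∈ G := AddSubgroup.subset_closure (by simp)
      have h2πG : (2 * Real.pi : ℝ) ∈ G := AddSubgroup.subset_closure (by simp)
      rw [hg] at hθG h2πG
      rw [AddSubgroup.mem_closure_singleton] at hθG h2πG
      obtain ⟨a, ha⟩ := hθG
      obtain ⟨b, hb⟩ := h2πG
      rw [zsmul_eq_mul] at ha hb
      have hb0 : b ≠ 0 := by
        rintro rfl
        simp at hb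
      -- β₀ ^ b = exp (b θ I) = exp (a b g I)... use b•θ = ab g, 2π b... compute β₀ ^ (b : ℤ)
      -- b * θ = b * a * g = a * (b * g) = a * 2π
      have hkey : (b : ℝ) * θ = (a : ℝ) * (2 * Real.pi) := by
        rw [← ha, ← hb]; ring
      have hpow : β₀ ^ (b : ℤ) = 1 := by
        rw [← hβ₀exp, ← Complex.exp_int_mul]
        have hc : ((b : ℝ) * θ : ℂ) = ((a : ℝ) * (2 * Real.pi) : ℂ) := by
          exact_mod_cast congrArg (fun x : ℝ => (x : ℂ)) hkey
        push_cast at hc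
        have h1 : (b : ℂ) * (↑θ * Complex.I) = ((a : ℂ) * (2 * ↑Real.pi)) * Complex.I := by
          calc (b : ℂ) * (↑θ * Complex.I) = ((b : ℂ) * ↑θ) * Complex.I := by ring
            _ = ((a : ℂ) * (2 * ↑Real.pi)) * Complex.I := by rw [hc]
        rw [h1]
        have h2 : ((a : ℂ) * (2 * ↑Real.pi)) * Complex.I
            = ((a : ℤ) : ℂ) * (2 * ↑Real.pi * Complex.I) := by push_cast; ring
        rw [h2, Complex.exp_int_mul, Complex.exp_two_pi_mul_I, one_zpow]
      have hnat : β₀ ^ (b.natAbs) = 1 := by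
        rcases Int.natAbs_eq b with h | h
        · rw [← zpow_natCast, ← h, hpow]
        · rw [← zpow_natCast, ← neg_neg (b.natAbs : ℤ), ← h, zpow_neg, hpow, inv_one]
      exact hru b.natAbs (Int.natAbs_pos.2 hb0) hnat
  -- conclude
  have hcont : Continuous fun x : ℝ => Complex.exp (x * Complex.I) := by
    exact Complex.continuous_exp.comp (Complex.continuous_ofReal.mul continuous_const)
  have humem : u = Complex.exp ((Complex.arg u : ℝ) * Complex.I) := by
    have := Complex.norm_mul_exp_arg_mul_I u
    rw [hu, Complex.ofReal_one, one_mul] at this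
    exact this.symm
  have : u ∈ (fun x : ℝ => Complex.exp (x * Complex.I)) '' closure (G : Set ℝ) := by
    rw [hdense.closure_eq]
    exact ⟨Complex.arg u, trivial, humem.symm⟩
  have hsub : (fun x : ℝ => Complex.exp (x * Complex.I)) '' (G : Set ℝ)
      ⊆ Set.range fun m : ℤ => β₀ ^ m := by
    rintro _ ⟨x, hx, rfl⟩
    obtain ⟨m, hm⟩ := hGmap x hx
    exact ⟨m, hm.symm⟩
  exact closure_mono hsub (image_closure_subset_closure_image hcont this)

lemma exists_pow_mem_of_open {β₀ : ℂ} (hβ₀ : ‖β₀‖ = 1)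
    (hru : ∀ n : ℕ, 0 < n → β₀ ^ n ≠ 1)
    {U : Set ℂ} (hU : IsOpen U) {u₀ : ℂ} (hu₀ : ‖u₀‖ = 1) (hmem : u₀ ∈ U) :
    ∀ N : ℕ, ∃ n : ℕ, N ≤ n ∧ β₀ ^ n ∈ U := by
  have hβne : β₀ ≠ 0 := by
    intro h; rw [h] at hβ₀; simp at hβ₀
  set C : ℕ → Set ℂ := fun N => closure (Set.range fun k : ℕ => β₀ ^ (N + k)) with hC
  have habs_pow : ∀ m : ℤ, ‖β₀ ^ m‖ = 1 := by
    intro m; rw [norm_zpow, hβ₀, one_zpow]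
  have hCsub : ∀ N, C N ⊆ Metric.sphere (0 : ℂ) 1 := by
    intro N
    apply closure_minimal
    · rintro _ ⟨k, rfl⟩
      simp only [Metric.mem_sphere, dist_zero_right]
      rw [← zpow_natCast β₀]
      exact habs_pow _
    · exact Metric.isClosed_sphere
  have hCanti : ∀ N, C (N + 1) ⊆ C N := by
    intro N
    apply closure_mono
    rintro _ ⟨k, rfl⟩
    exact ⟨k + 1, by ring_nf⟩
  have hCclosed : ∀ N, IsClosed (C N) := fun N => isClosed_closure
  have hCne : ∀ N, (C N).Nonempty := fun N => ⟨β₀ ^ (N + 0), subset_closure ⟨0, rfl⟩⟩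
  have hCcomp : IsCompact (C 0) :=
    (isCompact_sphere (0 : ℂ) 1).of_isClosed_subset (hCclosed 0) (hCsub 0)
  obtain ⟨z, hz⟩ := IsCompact.nonempty_iInter_of_sequence_nonempty_isCompact_isClosed
    C hCanti hCne hCcomp hCclosed
  have hzmem : ∀ N, z ∈ C N := by
    intro N; exact Set.mem_iInter.1 hz N
  -- multiplication facts
  have hmul : ∀ (w : ℂ) (N : ℕ) (c : ℂ), c ≠ 0 → w ∈ C N →
      ∀ (g : ℕ → ℂ), (∀ k, β₀ ^ (N + k) * c = g k) → w * c ∈ closure (Set.range g) := by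
    intro w N c hc hw g hg
    have : w * c ∈ (fun x => x * c) '' C N := ⟨w, hw, rfl⟩
    have hcont : Continuous fun x : ℂ => x * c := continuous_id.mul continuous_const
    have himg : (fun x => x * c) '' (Set.range fun k : ℕ => β₀ ^ (N + k)) = Set.range g := by
      ext x
      constructor
      · rintro ⟨_, ⟨k, rfl⟩, rfl⟩; exact ⟨k, (hg k).symm⟩
      · rintro ⟨k, rfl⟩; exact ⟨β₀ ^ (N + k), ⟨k, rfl⟩, hg k⟩
    rw [← himg]
    exact image_closure_subset_closure_image hcont this
  have horb : ∀ m : ℤ, ∀ N, z * β₀ ^ m ∈ C N := by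
    intro m
    induction m using Int.induction_on with
    | zero => intro N; simpa using hzmem N
    | succ n ih =>
      intro N
      have h1 : z * β₀ ^ ((n : ℤ) + 1) = (z * β₀ ^ (n : ℤ)) * β₀ := by
        rw [zpow_add_one₀ hβne]; ring
      rw [h1]
      have h2 := hmul (z * β₀ ^ (n : ℤ)) N β₀ hβne (ih N)
        (fun k => β₀ ^ ((N + 1) + k))
        (fun k => by rw [← pow_succ]; congr 1; omega)
      exact hCanti N h2
    | pred n ih =>
      intro N
      have h1 : z * β₀ ^ (-(n : ℤ) - 1) = (z * β₀ ^ (-(n : ℤ))) * β₀⁻¹ := by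
        rw [zpow_sub_one₀ hβne]; ring
      rw [h1]
      exact hmul _ (N + 1) β₀⁻¹ (inv_ne_zero hβne) (ih (N + 1))
        (fun k => β₀ ^ (N + k))
        (fun k => by
          rw [show (N + 1) + k = (N + k) + 1 from by omega, pow_succ,
            mul_inv_cancel_right₀ hβne])
  -- z is on the unit circle
  have hzabs : ‖z‖ = 1 := by
    have := hCsub 0 (hzmem 0)
    simpa using this
  have hzne : z ≠ 0 := by
    intro h; rw [h] at hzabs; simp at hzabs
  -- u₀ belongs to every C N
  intro N
  have hu₀CN : u₀ ∈ C N := by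
    have hinv : ‖z⁻¹ * u₀‖ = 1 := by
      rw [norm_mul, norm_inv, hzabs, hu₀]; norm_num
    have h1 : z⁻¹ * u₀ ∈ closure (Set.range fun m : ℤ => β₀ ^ m) :=
      zpowers_dense hβ₀ hru _ hinv
    have h2 : u₀ ∈ (fun x => z * x) '' closure (Set.range fun m : ℤ => β₀ ^ m) :=
      ⟨z⁻¹ * u₀, h1, by field_simp⟩
    have h3 : (fun x => z * x) '' (Set.range fun m : ℤ => β₀ ^ m)
        = Set.range fun m : ℤ => z * β₀ ^ m := by
      ext x
      constructor
      · rintro ⟨_, ⟨m, rfl⟩, rfl⟩; exact ⟨m, rfl⟩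
      · rintro ⟨m, rfl⟩; exact ⟨β₀ ^ m, ⟨m, rfl⟩, rfl⟩
    have h4 : u₀ ∈ closure (Set.range fun m : ℤ => z * β₀ ^ m) := by
      have := image_closure_subset_closure_image
        (s := Set.range fun m : ℤ => β₀ ^ m) (continuous_mul_left z) h2
      rwa [h3] at this
    have h5 : Set.range (fun m : ℤ => z * β₀ ^ m) ⊆ C N := by
      rintro _ ⟨m, rfl⟩; exact horb m N
    exact closure_minimal h5 (hCclosed N) h4
  obtain ⟨x, hxU, k, hk⟩ := _root_.mem_closure_iff.1 hu₀CN U hU hmem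
  exact ⟨N + k, by omega, by rw [← hk] at hxU; exact hxU⟩



/-! ### Existence of a prefix with non-aligned direction -/

section Eigen

variable [Fintype A] [DecidableEq A] {σ : A → List A} {β : ℂ} {γ : A → ℂ}

lemma unitDir_abs (hβ : 1 < ‖β‖) : ‖unitDir β‖ = 1 := by
  have h0 : (0:ℝ) < ‖β‖ := by linarith
  rw [unitDir, norm_div, Complex.norm_of_nonneg h0.le, div_self (ne_of_gt h0)]

lemma unitDir_ne_zero (hβ : 1 < ‖β‖) : unitDir β ≠ 0 := by
  intro h
  have := unitDir_abs hβ
  rw [h] at this; simp at this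

lemma beta_eq (hβ : 1 < ‖β‖) : β = (‖β‖ : ℂ) * unitDir β := by
  have h0 : (‖β‖ : ℂ) ≠ 0 := by
    simp only [ne_eq, Complex.ofReal_eq_zero]
    intro h; rw [h] at hβ; linarith
  rw [unitDir]
  field_simp

lemma zeta_exists (hγ : IsEigenvector σ β γ) (hβ : 1 < ‖β‖)
    (hβ0 : NotRootOfUnity (unitDir β)) {n₀ : ℕ} (hprim : ∀ a b : A, a ∈ substIter σ n₀ b)
    (hσ : ∀ a, σ a ≠ []) {a₀ : A} (ha₀ : γ a₀ ≠ 0) :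
    ∃ (j₁ : ℕ) (q₁ : List A), q₁ <+: substIter σ j₁ a₀ ∧
      ¬(0 ≤ (wordSum γ q₁ / ((unitDir β) ^ j₁ * γ a₀)).re ∧
        (wordSum γ q₁ / ((unitDir β) ^ j₁ * γ a₀)).im = 0) := by
  by_contra hcon
  push_neg at hcon
  set β₀ := unitDir β with hβ₀def
  have hb1 : ‖β₀‖ = 1 := unitDir_abs hβ
  have hbne : β₀ ≠ 0 := unitDir_ne_zero hβ
  have hbim : β₀.im ≠ 0 := by
    intro him
    have hre2 : β₀.re ^ 2 = 1 := by
      have h := Complex.sq_norm β₀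
      rw [hb1] at h
      rw [Complex.normSq_apply, him] at h
      nlinarith
    have hb2 : β₀ ^ 2 = 1 := by
      have hval : β₀ = (β₀.re : ℂ) := by
        apply Complex.ext <;> simp [him]
      rw [hval, ← Complex.ofReal_pow, hre2, Complex.ofReal_one]
    exact hβ0 2 (by norm_num) hb2
  have hletter : ∀ (j : ℕ), ∀ c ∈ substIter σ j a₀,
      (γ c / (β₀ ^ j * γ a₀)).im = 0 := by
    intro j c hc
    obtain ⟨k, hk, hget⟩ := List.getElem_of_mem hc
    have hp1 : (substIter σ j a₀).take k <+: substIter σ j a₀ := List.take_prefix _ _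
    have hp2 : (substIter σ j a₀).take (k+1) <+: substIter σ j a₀ := List.take_prefix _ _
    have h1 := (hcon j _ hp1).2
    have h2 := (hcon j _ hp2).2
    have hsplit : wordSum γ ((substIter σ j a₀).take (k+1))
        = wordSum γ ((substIter σ j a₀).take k) + γ c := by
      rw [List.take_succ, wordSum_append]
      congr 1
      rw [List.getElem?_eq_getElem hk, hget]
      simp [wordSum_cons, wordSum_nil]
    have heq : γ c / (β₀ ^ j * γ a₀)
        = wordSum γ ((substIter σ j a₀).take (k+1)) / (β₀ ^ j * γ a₀)
          - wordSum γ ((substIter σ j a₀).take k) / (β₀ ^ j * γ a₀) := by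
      rw [hsplit]; ring
    rw [heq, Complex.sub_im, h1, h2, sub_zero]
  have hzero : ∀ c : A, γ c = 0 := by
    intro c
    have hc1 := hletter n₀ c (hprim c a₀)
    have hc2 := hletter (n₀+1) c (mem_substIter_of_le hσ hprim a₀ (n₀+1) (by omega) c)
    by_contra hne
    have hd2 : β₀ ^ (n₀+1) * γ a₀ ≠ 0 := mul_ne_zero (pow_ne_zero _ hbne) ha₀
    set w' := γ c / (β₀ ^ (n₀+1) * γ a₀) with hw'
    have hw'ne : w' ≠ 0 := div_ne_zero hne hd2
    have hrel : γ c / (β₀ ^ n₀ * γ a₀) = w' * β₀ := by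
      rw [hw', pow_succ]
      field_simp
    have h1 : (w' * β₀).im = 0 := by rw [← hrel]; exact hc1
    have h2 : w'.im = 0 := hc2
    rw [Complex.mul_im, h2] at h1
    simp only [zero_mul, add_zero] at h1
    rcases mul_eq_zero.1 h1 with h | h
    · apply hw'ne
      apply Complex.ext <;> simp [h, h2]
    · exact hbim h
  apply hγ.1
  funext c
  exact hzero c

/-! ### The angle lemma -/

lemma exists_angle {ρ : ℝ} (h1 : -Real.pi < ρ) (h2 : ρ ≤ Real.pi) (h3 : ρ ≠ 0) :
    ∃ φ : ℝ, 0 < Real.cos φ ∧ Real.cos (φ + ρ) < 0 := by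
  have hπ := Real.pi_pos
  rcases lt_or_gt_of_ne h3 with hneg | hpos
  · refine ⟨-(Real.pi/2) - ρ/2, ?_, ?_⟩
    · rw [show -(Real.pi/2) - ρ/2 = -(Real.pi/2 + ρ/2) from by ring, Real.cos_neg]
      apply Real.cos_pos_of_mem_Ioo
      constructor
      · linarith
      · linarith
    · rw [show -(Real.pi/2) - ρ/2 + ρ = -(Real.pi/2 - ρ/2) from by ring, Real.cos_neg]
      apply Real.cos_neg_of_pi_div_two_lt_of_lt
      · linarith
      · linarith
  · refine ⟨Real.pi/2 - ρ/2, ?_, ?_⟩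
    · apply Real.cos_pos_of_mem_Ioo
      constructor
      · linarith
      · linarith
    · rw [show Real.pi/2 - ρ/2 + ρ = Real.pi/2 + ρ/2 from by ring]
      apply Real.cos_neg_of_pi_div_two_lt_of_lt
      · linarith
      · linarith

lemma mul_polar (z : ℂ) (φ : ℝ) :
    Complex.exp ((↑(φ - z.arg)) * Complex.I) * z
      = (‖z‖ : ℂ) * Complex.exp ((φ:ℂ) * Complex.I) := by
  have h := Complex.norm_mul_exp_arg_mul_I z
  calc Complex.exp ((↑(φ - z.arg)) * Complex.I) * z
      = Complex.exp ((↑(φ - z.arg)) * Complex.I)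
        * ((‖z‖ : ℂ) * Complex.exp ((↑z.arg) * Complex.I)) := by rw [h]
    _ = (‖z‖ : ℂ) * (Complex.exp ((↑(φ - z.arg)) * Complex.I)
        * Complex.exp ((↑z.arg) * Complex.I)) := by ring
    _ = (‖z‖ : ℂ) * Complex.exp ((φ:ℂ) * Complex.I) := by
        rw [← Complex.exp_add]; congr 1; push_cast; ring

lemma polar_mul (z : ℂ) (φ : ℝ) :
    Complex.exp ((φ:ℂ) * Complex.I) * z
      = (‖z‖ : ℂ) * Complex.exp ((↑(φ + z.arg)) * Complex.I) := by
  have h := Complex.norm_mul_exp_arg_mul_I z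
  calc Complex.exp ((φ:ℂ) * Complex.I) * z
      = Complex.exp ((φ:ℂ) * Complex.I)
        * ((‖z‖ : ℂ) * Complex.exp ((↑z.arg) * Complex.I)) := by rw [h]
    _ = (‖z‖ : ℂ) * (Complex.exp ((φ:ℂ) * Complex.I)
        * Complex.exp ((↑z.arg) * Complex.I)) := by ring
    _ = (‖z‖ : ℂ) * Complex.exp ((↑(φ + z.arg)) * Complex.I) := by
        rw [← Complex.exp_add]; congr 1; push_cast; ring

/-! ### The window lemma -/

lemma window (hγ : IsEigenvector σ β γ) (hβ : 1 < ‖β‖)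
    (hβ0 : NotRootOfUnity (unitDir β)) {n₀ : ℕ} (hprim : ∀ a b : A, a ∈ substIter σ n₀ b)
    (hσ : ∀ a, σ a ≠ []) {a₀ : A} (ha₀ : γ a₀ ≠ 0) (N : ℕ) :
    ∃ (nW : ℕ) (p : ℕ),
      N < p ∧ p + N < (substIter σ nW a₀).length ∧
      ∀ k ≤ (substIter σ nW a₀).length,
        (wordSum γ ((substIter σ nW a₀).take p)).re
          ≤ (wordSum γ ((substIter σ nW a₀).take k)).re := by
  set β₀ := unitDir β with hβ₀def
  have hb1 : ‖β₀‖ = 1 := unitDir_abs hβ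
  have hbne : β₀ ≠ 0 := unitDir_ne_zero hβ
  have hβfac : β = (‖β‖ : ℂ) * β₀ := beta_eq hβ
  obtain ⟨j₁, q₁, hpre, hζcon⟩ := zeta_exists hγ hβ hβ0 hprim hσ ha₀
  set c₁ := γ a₀ with hc₁def
  have hc₁ne : c₁ ≠ 0 := ha₀
  have hden : β₀ ^ j₁ * c₁ ≠ 0 := mul_ne_zero (pow_ne_zero _ hbne) hc₁ne
  set ζ := wordSum γ q₁ / (β₀ ^ j₁ * c₁) with hζdef
  have hζne : ζ ≠ 0 := by
    intro h
    exact hζcon (by rw [h]; simp)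
  have hρne : ζ.arg ≠ 0 := by
    intro h
    exact hζcon (Complex.arg_eq_zero_iff.1 h)
  obtain ⟨φ, hcosφ, hcosφρ⟩ := exists_angle (Complex.neg_pi_lt_arg ζ) (Complex.arg_le_pi ζ) hρne
  set c₂ := c₁ * ζ with hc₂def
  set u₀ : ℂ := Complex.exp ((↑(φ - c₁.arg)) * Complex.I) with hu₀def
  have hws : wordSum γ q₁ = β₀ ^ j₁ * c₁ * ζ := by
    rw [hζdef]
    field_simp
  have hu₀c₁ : u₀ * c₁ = (‖c₁‖ : ℂ) * Complex.exp ((φ:ℂ) * Complex.I) :=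
    mul_polar c₁ φ
  have hu₀c₂ : u₀ * c₂ = ((‖c₁‖ * ‖ζ‖ : ℝ) : ℂ)
      * Complex.exp ((↑(φ + ζ.arg)) * Complex.I) := by
    calc u₀ * c₂ = (u₀ * c₁) * ζ := by rw [hc₂def]; ring
      _ = ((‖c₁‖ : ℂ) * Complex.exp ((φ:ℂ) * Complex.I)) * ζ := by rw [hu₀c₁]
      _ = (‖c₁‖ : ℂ) * (Complex.exp ((φ:ℂ) * Complex.I) * ζ) := by ring
      _ = (‖c₁‖ : ℂ)
          * ((‖ζ‖ : ℂ) * Complex.exp ((↑(φ + ζ.arg)) * Complex.I)) := by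
          rw [polar_mul]
      _ = _ := by push_cast; ring
  have habsc₁ : 0 < ‖c₁‖ := by
    rw [norm_pos_iff]; exact hc₁ne
  have habsζ : 0 < ‖ζ‖ := by
    rw [norm_pos_iff]; exact hζne
  set ε₂ : ℝ := (‖c₁‖ * ‖ζ‖ * (-Real.cos (φ + ζ.arg))) / 2 with hε₂def
  have hε₂pos : 0 < ε₂ := by
    rw [hε₂def]
    have : 0 < -Real.cos (φ + ζ.arg) := by linarith
    positivity
  have hre1 : (u₀ * c₁).re = ‖c₁‖ * Real.cos φ := by
    rw [hu₀c₁, Complex.re_ofReal_mul, Complex.exp_ofReal_mul_I_re]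
  have hre2 : (u₀ * c₂).re = ‖c₁‖ * ‖ζ‖ * Real.cos (φ + ζ.arg) := by
    rw [hu₀c₂, Complex.re_ofReal_mul, Complex.exp_ofReal_mul_I_re]
  set U : Set ℂ := {u : ℂ | 0 < (u * c₁).re} ∩ {u : ℂ | (u * c₂).re < -ε₂} with hUdef
  have hUopen : IsOpen U := by
    apply IsOpen.inter
    · exact isOpen_lt continuous_const
        (Complex.continuous_re.comp (continuous_id.mul continuous_const))
    · exact isOpen_lt (Complex.continuous_re.comp (continuous_id.mul continuous_const))
        continuous_const
  have habsu₀ : ‖u₀‖ = 1 := by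
    rw [hu₀def, Complex.norm_exp_ofReal_mul_I]
  have hu₀U : u₀ ∈ U := by
    constructor
    · show 0 < (u₀ * c₁).re
      rw [hre1]; positivity
    · show (u₀ * c₂).re < -ε₂
      rw [hre2, hε₂def]
      nlinarith
  have hru : ∀ n : ℕ, 0 < n → β₀ ^ n ≠ 1 := hβ0
  -- constants
  set G : ℝ := ∑ b : A, ‖γ b‖ with hGdef
  have hG0 : 0 ≤ G := Finset.sum_nonneg (fun b _ => norm_nonneg _)
  obtain ⟨M₀, hM₀⟩ := pow_unbounded_of_one_lt ((N * G + 1)/ε₂) hβ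
  obtain ⟨n, hnge, hnU⟩ := exists_pow_mem_of_open hb1 hru hUopen habsu₀ hu₀U (j₁ + M₀)
  obtain ⟨m, hnm⟩ : ∃ m, n = m + j₁ := ⟨n - j₁, by omega⟩
  have hmM₀ : M₀ ≤ m := by omega
  set W := substIter σ n a₀ with hWdef
  set L := W.length with hLdef
  set S : ℕ → ℝ := fun k => (wordSum γ (W.take k)).re with hSdef
  -- the full sum is positive
  have habsβpos : (0:ℝ) < ‖β‖ := by linarith
  have hβpow : ∀ j : ℕ, (β : ℂ) ^ j = ((‖β‖ ^ j : ℝ) : ℂ) * β₀ ^ j := by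
    intro j
    conv_lhs => rw [hβfac]
    rw [mul_pow]
    push_cast
    ring
  have hSL : S L = ‖β‖ ^ n * (β₀ ^ n * c₁).re := by
    rw [hSdef]
    simp only [hLdef, List.take_length]
    rw [hWdef, wordSum_substIter hγ, hβpow n, mul_assoc, Complex.re_ofReal_mul]
  have hSLpos : 0 < S L := by
    rw [hSL]
    have h1 : 0 < (β₀ ^ n * c₁).re := hnU.1
    positivity
  -- the deep negative prefix
  have hq'pre : substIterW σ m q₁ <+: W := by
    have h1 := substIterW_prefix σ m hpre
    rwa [substIterW_substIter σ m j₁ a₀, ← hnm] at h1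
  set k₀ := (substIterW σ m q₁).length with hk₀def
  have hk₀le : k₀ ≤ L := hq'pre.length_le
  have htake : W.take k₀ = substIterW σ m q₁ := (List.prefix_iff_eq_take.1 hq'pre).symm
  have hSk₀ : S k₀ = ‖β‖ ^ m * (β₀ ^ n * c₂).re := by
    rw [hSdef]
    simp only
    rw [htake, wordSum_substIterW hγ, hws, hβpow m]
    have : ((‖β‖ ^ m : ℝ) : ℂ) * β₀ ^ m * (β₀ ^ j₁ * c₁ * ζ)
        = ((‖β‖ ^ m : ℝ) : ℂ) * (β₀ ^ n * c₂) := by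
      rw [hnm, pow_add, hc₂def]
      ring
    rw [this, Complex.re_ofReal_mul]
  have hSk₀neg : S k₀ < -(N * G + 1) := by
    rw [hSk₀]
    have h2 : (β₀ ^ n * c₂).re < -ε₂ := hnU.2
    have h3 : ‖β‖ ^ m * (β₀ ^ n * c₂).re < ‖β‖ ^ m * (-ε₂) := by
      apply mul_lt_mul_of_pos_left h2
      positivity
    have h4 : (N * G + 1)/ε₂ < ‖β‖ ^ m := by
      calc (N * G + 1)/ε₂ < ‖β‖ ^ M₀ := hM₀
        _ ≤ ‖β‖ ^ m := by
            apply pow_le_pow_right₀ (by linarith) hmM₀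
    have h5 : N * G + 1 < ε₂ * ‖β‖ ^ m := by
      rw [div_lt_iff₀ hε₂pos] at h4
      linarith
    nlinarith
  -- the minimum
  obtain ⟨p, hpmem, hpmin⟩ := Finset.exists_min_image (Finset.range (L+1)) S
    ⟨0, Finset.mem_range.2 (by omega)⟩
  have hple : p ≤ L := by
    have := Finset.mem_range.1 hpmem; omega
  have hSpk₀ : S p ≤ S k₀ := hpmin k₀ (Finset.mem_range.2 (by omega))
  -- lower bound near the left end
  have hleft : ∀ k, k ≤ N → -(N * G) ≤ S k := by
    intro k hk
    have h1 : ‖wordSum γ (W.take k)‖ ≤ ((W.take k).length : ℝ) * G :=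
      abs_wordSum_le γ (W.take k)
    have h2 : ((W.take k).length : ℝ) * G ≤ N * G := by
      apply mul_le_mul_of_nonneg_right _ hG0
      exact_mod_cast le_trans (List.length_take_le k W) hk
    have h3 : -‖wordSum γ (W.take k)‖ ≤ (wordSum γ (W.take k)).re :=
      (abs_le.1 (Complex.abs_re_le_norm _)).1
    show -((N:ℝ) * G) ≤ (wordSum γ (W.take k)).re
    linarith
  -- lower bound near the right end
  have hright : ∀ k, k ≤ L → L ≤ k + N → -(N * G) ≤ S k := by
    intro k hkL hLk
    have hsplit : W.take L = W.take k ++ (W.drop k).take (L - k) := by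
      rw [← List.take_add]
      congr 1
      omega
    have hsum : S L = S k + (wordSum γ ((W.drop k).take (L - k))).re := by
      rw [hSdef]
      simp only
      rw [hsplit, wordSum_append, Complex.add_re]
    have h1 : ‖wordSum γ ((W.drop k).take (L - k))‖
        ≤ (((W.drop k).take (L - k)).length : ℝ) * G :=
      abs_wordSum_le γ ((W.drop k).take (L - k))
    have h2 : (((W.drop k).take (L - k)).length : ℝ) * G ≤ N * G := by
      apply mul_le_mul_of_nonneg_right _ hG0
      have := List.length_take_le (L - k) (W.drop k)
      have hle : ((W.drop k).take (L - k)).length ≤ N := by omega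
      exact_mod_cast hle
    have h3 : (wordSum γ ((W.drop k).take (L - k))).re
        ≤ ‖wordSum γ ((W.drop k).take (L - k))‖ :=
      (abs_le.1 (Complex.abs_re_le_norm _)).2
    show -((N:ℝ) * G) ≤ S k
    linarith
  have hNG1 : -(N * G + 1) < -(N * G) := by linarith
  have hpN : N < p := by
    by_contra h
    push_neg at h
    have := hleft p h
    linarith
  have hpL : p + N < L := by
    by_contra h
    push_neg at h
    have := hright p hple (by omega)
    linarith
  refine ⟨n, p, hpN, hpL, fun k hk => hpmin k (Finset.mem_range.2 ?_)⟩
  have hkL : k ≤ L := by rw [hLdef, hWdef]; exact hk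
  omega

end Eigen

end MinSeqAux

/-- **Lemma 4.4** (existence of minimal sequences). Let `T` be a self-similar i.e.m.
with primitive associated substitution `σ`, `β` an eigenvalue of `M` with `|β| > 1`
and `β/|β|` not a root of unity, and `γ` an eigenvector for `β`. Then there exists a
minimal sequence for `γ`: some `ω ∈ Ω_σ` with `Re(γ_n(ω)) ≥ 0` for all `n ∈ ℤ`. -/
theorem existsMinimalSeq {A : Type} [Fintype A] [DecidableEq A]
    (T : IEMWandering.SelfSimilarIEM A) (hprim : IEMWandering.Primitive T.σ)
    (β : ℂ) (γ : A → ℂ) (hβ : 1 < ‖β‖)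
    (hβ0 : IEMWandering.NotRootOfUnity (IEMWandering.unitDir β))
    (hγ : IEMWandering.IsEigenvector T.σ β γ) :
    ∃ ω : ℤ → A, IEMWandering.InOmega T.σ ω ∧
      ∀ n : ℤ, 0 ≤ (IEMWandering.gammaZ γ ω n).re := by
  classical
  obtain ⟨n₀, hn₀⟩ := hprim
  obtain ⟨a₀, ha₀⟩ : ∃ a, γ a ≠ 0 := by
    by_contra h
    push_neg at h
    exact hγ.1 (funext h)
  have hσne : ∀ a, T.σ a ≠ [] := T.σ_ne
  have hwin := fun N => window hγ hβ hβ0 hn₀ hσne ha₀ N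
  choose nW pf h1 h2 h3 using hwin
  set seq : ℕ → ℤ → A :=
    fun N i => (IEMWandering.substIter T.σ (nW N) a₀).getD ((pf N : ℤ) + i).toNat a₀
    with hseqdef
  -- windows have nonnegative partial sums around the center
  have P1 : ∀ (N : ℕ) (n : ℤ), n.natAbs ≤ N → 0 ≤ (IEMWandering.gammaZ γ (seq N) n).re := by
    intro N n hn
    set W := IEMWandering.substIter T.σ (nW N) a₀ with hW
    set p := pf N with hp
    have hpN : N < p := h1 N
    have hpL : p + N < W.length := h2 N
    have hmin : ∀ k ≤ W.length,
        (IEMWandering.wordSum γ (W.take p)).re ≤ (IEMWandering.wordSum γ (W.take k)).re :=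
      h3 N
    have hseq : ∀ i : ℤ, seq N i = W.getD ((p : ℤ) + i).toNat a₀ := fun i => rfl
    clear_value W p
    clear hW hp
    rcases le_or_gt 0 n with hn0 | hn0
    · rw [IEMWandering.gammaZ, if_pos hn0]
      have hn'N : n.toNat ≤ N := by omega
      have hsum : ∑ i ∈ Finset.range n.toNat, γ (seq N (i : ℤ))
          = IEMWandering.wordSum γ ((W.drop p).take n.toNat) := by
        rw [← sum_range_getD_drop γ a₀ W p n.toNat (by omega)]
        apply Finset.sum_congr rfl
        intro i _
        have hidx : ((p : ℤ) + (i : ℤ)).toNat = p + i := by omega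
        rw [hseq, hidx]
      rw [hsum]
      have htake := take_add_wordSum γ W p n.toNat
      have hre : (IEMWandering.wordSum γ ((W.drop p).take n.toNat)).re
          = (IEMWandering.wordSum γ (W.take (p + n.toNat))).re
            - (IEMWandering.wordSum γ (W.take p)).re := by
        rw [htake]
        simp [Complex.add_re]
      rw [hre]
      have := hmin (p + n.toNat) (by omega)
      linarith
    · rw [IEMWandering.gammaZ, if_neg (by omega)]
      have hn'N : (-n).toNat ≤ N := by omega
      have hn'p : (-n).toNat ≤ p := by omega
      have hjlen : (p - (-n).toNat) + (-n).toNat ≤ W.length := by omega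
      have hjp : (p - (-n).toNat) + (-n).toNat = p := by omega
      have hsum : ∑ i ∈ Finset.range ((-n).toNat), γ (seq N (n + (i : ℤ)))
          = IEMWandering.wordSum γ ((W.drop (p - (-n).toNat)).take ((-n).toNat)) := by
        rw [← sum_range_getD_drop γ a₀ W (p - (-n).toNat) ((-n).toNat) hjlen]
        apply Finset.sum_congr rfl
        intro i hi
        have hi' : i < (-n).toNat := Finset.mem_range.1 hi
        have hidx : ((p : ℤ) + (n + (i : ℤ))).toNat = (p - (-n).toNat) + i := by omega
        rw [hseq, hidx]
      rw [hsum]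
      have htake := take_add_wordSum γ W (p - (-n).toNat) ((-n).toNat)
      rw [hjp] at htake
      have hre : (IEMWandering.wordSum γ ((W.drop (p - (-n).toNat)).take ((-n).toNat))).re
          = (IEMWandering.wordSum γ (W.take p)).re
            - (IEMWandering.wordSum γ (W.take (p - (-n).toNat))).re := by
        rw [htake]
        simp [Complex.add_re]
      rw [Complex.neg_re, hre]
      have := hmin (p - (-n).toNat) (by omega)
      linarith
  -- windows give legal words
  have P2 : ∀ (N : ℕ) (m : ℤ) (len : ℕ), m.natAbs + len ≤ N →
      (List.ofFn fun i : Fin len => seq N (m + (i.val : ℤ)))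
        <:+: IEMWandering.substIter T.σ (nW N) a₀ := by
    intro N m len hm
    have hpN : N < pf N := h1 N
    have hpL : pf N + N < (IEMWandering.substIter T.σ (nW N) a₀).length := h2 N
    set W := IEMWandering.substIter T.σ (nW N) a₀ with hW
    set p := pf N with hp
    have hseq : ∀ i : ℤ, seq N i = W.getD ((p : ℤ) + i).toNat a₀ := fun i => rfl
    have hpN' : N < p := hpN
    have hpL' : p + N < W.length := hpL
    clear_value W p
    clear hW hp hpN hpL
    set j : ℕ := ((p : ℤ) + m).toNat with hjdef
    have hj : (j : ℤ) = (p : ℤ) + m := by omega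
    clear_value j
    clear hjdef
    have hjlen : j + len ≤ W.length := by omega
    have heq : (List.ofFn fun i : Fin len => seq N (m + (i.val : ℤ)))
        = (W.drop j).take len := by
      apply List.ext_getElem
      · simp only [List.length_ofFn, List.length_take, List.length_drop]
        omega
      · intro i hi1 hi2
        rw [List.getElem_ofFn]
        simp only [List.length_ofFn] at hi1
        have hji : j + i < W.length := by omega
        rw [List.getElem_take, List.getElem_drop]
        rw [hseq]
        have hidx : ((p : ℤ) + (m + (i : ℤ))).toNat = j + i := by omega
        rw [hidx]
        exact List.getD_eq_getElem W a₀ hji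
    rw [heq]
    exact ((W.drop j).take_prefix len).isInfix.trans (W.drop_suffix j).isInfix
  -- ultrafilter limit
  set U : Ultrafilter ℕ := Filter.hyperfilter ℕ with hUdef
  have hex : ∀ i : ℤ, ∃ a : A, {N : ℕ | seq N i = a} ∈ U := by
    intro i
    by_contra h
    push_neg at h
    have hmem : ∀ a : A, {N : ℕ | seq N i = a}ᶜ ∈ U := fun a =>
      (Ultrafilter.compl_mem_iff_notMem.2 (h a))
    have hint : (⋂ a : A, {N : ℕ | seq N i = a}ᶜ) ∈ U := Filter.iInter_mem.2 hmem
    obtain ⟨N, hN⟩ := Ultrafilter.nonempty_of_mem hint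
    simp only [Set.mem_iInter, Set.mem_compl_iff, Set.mem_setOf_eq] at hN
    exact hN (seq N i) rfl
  choose ω hω using hex
  have hlarge : ∀ c : ℕ, {N : ℕ | c ≤ N} ∈ U := by
    intro c
    have h1' : {N : ℕ | c ≤ N} ∈ Filter.atTop := Filter.mem_atTop c
    rw [← Nat.cofinite_eq_atTop] at h1'
    exact Filter.hyperfilter_le_cofinite h1'
  have hagree : ∀ (F : Finset ℤ) (c : ℕ),
      ∃ N : ℕ, c ≤ N ∧ ∀ i ∈ F, seq N i = ω i := by
    intro F c
    have hFin : (⋂ i ∈ (F : Set ℤ), {N : ℕ | seq N i = ω i}) ∈ U :=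
      (Filter.biInter_mem F.finite_toSet).2 (fun i _ => hω i)
    have hall : ({N : ℕ | c ≤ N} ∩ ⋂ i ∈ (F : Set ℤ), {N : ℕ | seq N i = ω i}) ∈ U :=
      Filter.inter_mem (hlarge c) hFin
    obtain ⟨N, hN1, hN2⟩ := Ultrafilter.nonempty_of_mem hall
    refine ⟨N, hN1, fun i hi => ?_⟩
    have := Set.mem_iInter₂.1 hN2 i (by exact_mod_cast hi)
    exact this
  refine ⟨ω, ?_, ?_⟩
  · -- InOmega
    intro m len
    obtain ⟨N, hNc, hNa⟩ := hagree
      ((Finset.range len).image (fun i : ℕ => m + (i : ℤ))) (m.natAbs + len)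
    refine ⟨nW N, a₀, ?_⟩
    have heqw : (List.ofFn fun i : Fin len => ω (m + (i.val : ℤ)))
        = (List.ofFn fun i : Fin len => seq N (m + (i.val : ℤ))) := by
      congr 1
      funext i
      exact (hNa (m + (i.val : ℤ))
        (Finset.mem_image.2 ⟨i.val, Finset.mem_range.2 i.2, rfl⟩)).symm
    rw [heqw]
    exact P2 N m len hNc
  · -- nonnegativity
    intro n
    obtain ⟨N, hNc, hNa⟩ := hagree (Finset.Icc (-(n.natAbs : ℤ)) (n.natAbs : ℤ)) n.natAbs
    have hgz : IEMWandering.gammaZ γ ω n = IEMWandering.gammaZ γ (seq N) n := by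
      rcases le_or_gt 0 n with hn0 | hn0
      · rw [IEMWandering.gammaZ, IEMWandering.gammaZ, if_pos hn0, if_pos hn0]
        apply Finset.sum_congr rfl
        intro i hi
        have hi' : i < n.toNat := Finset.mem_range.1 hi
        congr 1
        exact (hNa (i : ℤ) (Finset.mem_Icc.2 (by omega))).symm
      · rw [IEMWandering.gammaZ, IEMWandering.gammaZ, if_neg (by omega), if_neg (by omega)]
        congr 1
        apply Finset.sum_congr rfl
        intro i hi
        have hi' : i < (-n).toNat := Finset.mem_range.1 hi
        congr 1
        exact (hNa (n + (i : ℤ)) (Finset.mem_Icc.2 (by omega))).symm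
    rw [hgz]
    exact P1 N n hNc
end
end

section
/- (Continuation property.) Let a ∈ 𝒜 and τ ∈ S¹. If x ∈ 𝒮_a satisfies z_a(x) ∈ E_a(τ), then z_{c_1^x}(S(x)) ∈ E_{c_1^x}(β₀^{-1}τ), where S is the left shift, and moreover Re(τ z_a(x)) = Re(τ β^{-1} γ(p_1^x)) + |β|^{-1} v_{c_1^x}(β₀^{-1}τ). Similarly, if x ∈ 𝒮_a satisfies z_a^{(n)}(x) ∈ E_a^{(n)}(τ) for an integer n ≥ 1, then z_{c_1^x}^{(n−1)}(S(x)) ∈ E_{c_1^x}^{(n−1)}(β₀^{-1}τ) and Re(τ z_a^{(n)}(x)) = Re(τ β^{-1} γ(p_1^x)) + |β|^{-1} v_{c_1^x}^{(n−1)}(β₀^{-1}τ). -/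
open Complex MeasureTheory Filter Set
open scoped BigOperators

noncomputable section

namespace IEMWandering

variable {A : Type} {σ : A → List A} {β : ℂ} {γ : A → ℂ}

/-- Prepend a triple to a sequence of triples. -/
def consS {A : Type} (d : Triple A) (y : ℕ → Triple A) : ℕ → Triple A
  | 0 => d
  | m+1 => y m

lemma shiftS_consS (d : Triple A) (y : ℕ → Triple A) : shiftS (consS d y) = y := rfl

lemma InS.shift {a : A} {x : ℕ → Triple A} (hx : InS σ a x) :
    InS σ ((x 0).2.1) (shiftS x) :=
  ⟨hx.2 0, fun m => hx.2 (m+1)⟩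

lemma InS.cons {a : A} {x y : ℕ → Triple A}
    (hx : InS σ a x) (hy : InS σ ((x 0).2.1) y) : InS σ a (consS (x 0) y) := by
  refine ⟨hx.1, fun m => ?_⟩
  cases m with
  | zero => exact hy.1
  | succ m => exact hy.2 m

lemma wordSum_norm_le (γ : A → ℂ) (w : List A) :
    ‖wordSum γ w‖ ≤ (w.map (fun l => ‖γ l‖)).sum := by
  induction w with
  | nil => simp [wordSum]
  | cons l w ih =>
      simp only [wordSum, List.map_cons, List.sum_cons] at *
      exact (norm_add_le _ _).trans (by linarith)

lemma prefix_sum_le (f : A → ℝ) (hf : ∀ l, 0 ≤ f l) (w v : List A) :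
    (w.map f).sum ≤ ((w ++ v).map f).sum := by
  rw [List.map_append, List.sum_append]
  have : 0 ≤ (v.map f).sum := List.sum_nonneg (by
    intro x hx
    obtain ⟨l, -, rfl⟩ := List.mem_map.1 hx
    exact hf l)
  linarith

lemma term_bound (hβ : 1 < ‖β‖) {C : ℝ}
    (hC : ∀ b, ((σ b).map (fun l => ‖γ l‖)).sum ≤ C)
    {c : A} {x : ℕ → Triple A} (hx : InS σ c x) (m : ℕ) :
    ‖β⁻¹ ^ (m+1) * wordSum γ (x m).1‖ ≤ C * (‖β‖)⁻¹ ^ (m+1) := by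
  have hpre : ‖wordSum γ (x m).1‖ ≤ C := by
    have h : ∃ b, σ b = (x m).1 ++ (x m).2.1 :: (x m).2.2 := by
      cases m with
      | zero => exact ⟨c, hx.1⟩
      | succ m => exact ⟨(x m).2.1, hx.2 m⟩
    obtain ⟨b, hb⟩ := h
    calc ‖wordSum γ (x m).1‖ ≤ ((x m).1.map (fun l => ‖γ l‖)).sum := wordSum_norm_le γ _
      _ ≤ (((x m).1 ++ (x m).2.1 :: (x m).2.2).map (fun l => ‖γ l‖)).sum :=
          prefix_sum_le _ (fun l => norm_nonneg _) _ _
      _ = ((σ b).map (fun l => ‖γ l‖)).sum := by rw [hb]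
      _ ≤ C := hC b
  have hn : ‖β⁻¹ ^ (m+1)‖ = (‖β‖)⁻¹ ^ (m+1) := by
    rw [norm_pow, norm_inv]
  rw [norm_mul, hn, mul_comm]
  exact mul_le_mul_of_nonneg_right hpre (by positivity)

lemma geom_summable (hβ : 1 < ‖β‖) (C : ℝ) :
    Summable (fun m : ℕ => C * (‖β‖)⁻¹ ^ (m+1)) := by
  have hr : (‖β‖)⁻¹ < 1 := inv_lt_one_of_one_lt₀ hβ
  have hr0 : 0 ≤ (‖β‖)⁻¹ := by positivity
  have h := (summable_geometric_of_lt_one hr0 hr).mul_left (C * (‖β‖)⁻¹)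
  refine h.congr fun m => ?_
  rw [pow_succ]
  ring

lemma zrep_summable (hβ : 1 < ‖β‖) {C : ℝ}
    (hC : ∀ b, ((σ b).map (fun l => ‖γ l‖)).sum ≤ C)
    {c : A} {x : ℕ → Triple A} (hx : InS σ c x) :
    Summable (fun m : ℕ => β⁻¹ ^ (m+1) * wordSum γ (x m).1) :=
  Summable.of_norm_bounded (geom_summable hβ C) (term_bound hβ hC hx)

lemma zrep_rec {x : ℕ → Triple A}
    (hsum : Summable (fun m : ℕ => β⁻¹ ^ (m+1) * wordSum γ (x m).1)) :
    zrep β γ x = β⁻¹ * wordSum γ (x 0).1 + β⁻¹ * zrep β γ (shiftS x) := by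
  rw [zrep, hsum.tsum_eq_zero_add, pow_one]
  congr 1
  rw [zrep, ← tsum_mul_left]
  refine tsum_congr fun m => ?_
  simp only [shiftS]
  ring

lemma zrepN_rec (k : ℕ) (x : ℕ → Triple A) :
    zrepN β γ (k+1) x = β⁻¹ * wordSum γ (x 0).1 + β⁻¹ * zrepN β γ k (shiftS x) := by
  rw [zrepN, zrepN, Finset.sum_range_succ', Finset.mul_sum, add_comm, pow_one]
  congr 1
  refine Finset.sum_congr rfl fun i _ => ?_
  simp only [shiftS]
  ring

lemma re_split (hβ : 1 < ‖β‖) (τ p z' : ℂ) :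
    (τ * (β⁻¹ * p + β⁻¹ * z')).re =
      (τ * β⁻¹ * p).re + (‖β‖)⁻¹ * (((unitDir β)⁻¹ * τ) * z').re := by
  have hb0 : (0:ℝ) < ‖β‖ := lt_trans zero_lt_one hβ
  have hb : β ≠ 0 := by
    intro h; rw [h] at hb0; simp at hb0
  have habs : (‖β‖ : ℂ) ≠ 0 := Complex.ofReal_ne_zero.2 (ne_of_gt hb0)
  have key : τ * (β⁻¹ * z') = (((‖β‖)⁻¹ : ℝ) : ℂ) * (((unitDir β)⁻¹ * τ) * z') := by
    rw [unitDir]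
    push_cast
    field_simp
  rw [mul_add, Complex.add_re, key, Complex.re_ofReal_mul, ← mul_assoc τ,
    mul_assoc (unitDir β)⁻¹]

lemma bddBelow_re_image (K : ℝ) (τ' : ℂ) (hτ' : ‖τ'‖ = 1) (S : Set ℂ)
    (hS : ∀ z ∈ S, ‖z‖ ≤ K) :
    BddBelow ((fun z => (τ' * z).re) '' S) := by
  refine ⟨-K, ?_⟩
  rintro r ⟨z, hz, rfl⟩
  have h1 : ‖τ' * z‖ ≤ K := by
    rw [norm_mul, hτ', one_mul]; exact hS z hz
  have h2 := Complex.abs_re_le_norm (τ' * z)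
  have h3 := neg_abs_le ((τ' * z).re)
  simp only
  linarith

/-- The abstract core of the continuation argument. -/
lemma continuation_core {a : A} {τ : ℂ} (hβ : 1 < ‖β‖)
    (Z Zc : (ℕ → Triple A) → ℂ)
    (hrec : ∀ y : ℕ → Triple A, InS σ a y →
      Z y = β⁻¹ * wordSum γ (y 0).1 + β⁻¹ * Zc (shiftS y))
    {x : ℕ → Triple A} (hx : InS σ a x)
    (Fa Fc : Set ℂ)
    (hFa : ∀ y : ℕ → Triple A, InS σ a y → Z y ∈ Fa)
    (hFc : Fc = {z | ∃ y, InS σ ((x 0).2.1) y ∧ Zc y = z})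
    (hbdda : BddBelow ((fun z => (τ * z).re) '' Fa))
    (hbddc : BddBelow ((fun z => (((unitDir β)⁻¹ * τ) * z).re) '' Fc))
    (hval : (τ * Z x).re = sInf ((fun z => (τ * z).re) '' Fa)) :
    Zc (shiftS x) ∈ Fc ∧
    (((unitDir β)⁻¹ * τ) * Zc (shiftS x)).re =
      sInf ((fun z => (((unitDir β)⁻¹ * τ) * z).re) '' Fc) ∧
    (τ * Z x).re = (τ * β⁻¹ * wordSum γ (x 0).1).re +
      (‖β‖)⁻¹ * sInf ((fun z => (((unitDir β)⁻¹ * τ) * z).re) '' Fc) := by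
  have hb0 : (0:ℝ) < ‖β‖ := lt_trans zero_lt_one hβ
  have hbpos : (0:ℝ) < (‖β‖)⁻¹ := by positivity
  set τ' := (unitDir β)⁻¹ * τ with hτ'def
  have hzmem : Zc (shiftS x) ∈ Fc := by
    rw [hFc]; exact ⟨shiftS x, hx.shift, rfl⟩
  have hxsplit : (τ * Z x).re = (τ * β⁻¹ * wordSum γ (x 0).1).re +
      (‖β‖)⁻¹ * (τ' * Zc (shiftS x)).re := by
    rw [hrec x hx, re_split hβ]
  have hmin : ∀ w ∈ Fc, (τ' * Zc (shiftS x)).re ≤ (τ' * w).re := by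
    intro w hw
    rw [hFc] at hw
    obtain ⟨y, hy, rfl⟩ := hw
    have hx' : InS σ a (consS (x 0) y) := hx.cons hy
    have hsplit' : (τ * Z (consS (x 0) y)).re
        = (τ * β⁻¹ * wordSum γ (x 0).1).re + (‖β‖)⁻¹ * (τ' * Zc y).re := by
      rw [hrec _ hx', shiftS_consS, re_split hβ]
      rfl
    have hle : sInf ((fun z => (τ * z).re) '' Fa) ≤ (τ * Z (consS (x 0) y)).re :=
      csInf_le hbdda ⟨Z (consS (x 0) y), hFa _ hx', rfl⟩
    rw [← hval, hxsplit, hsplit'] at hle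
    have : (‖β‖)⁻¹ * (τ' * Zc (shiftS x)).re ≤
        (‖β‖)⁻¹ * (τ' * Zc y).re := by linarith
    exact le_of_mul_le_mul_left this hbpos
  have hge : sInf ((fun z => (τ' * z).re) '' Fc) ≤ (τ' * Zc (shiftS x)).re :=
    csInf_le hbddc ⟨Zc (shiftS x), hzmem, rfl⟩
  have hle2 : (τ' * Zc (shiftS x)).re ≤ sInf ((fun z => (τ' * z).re) '' Fc) := by
    refine le_csInf ⟨(τ' * Zc (shiftS x)).re, ⟨Zc (shiftS x), hzmem, rfl⟩⟩ ?_
    rintro r ⟨w, hw, rfl⟩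
    exact hmin w hw
  have heq := le_antisymm hle2 hge
  exact ⟨hzmem, heq, by rw [hxsplit, heq]⟩

end IEMWandering

/-- **Lemma 5.5** (continuation property). If `x ∈ 𝒮_a` represents an extreme point
of `𝔉_a` in direction `τ`, then the shifted sequence represents an extreme point of
`𝔉_{c₁}` in direction `β₀⁻¹τ`, and
`Re(τ z_a(x)) = Re(τβ⁻¹γ(p₁)) + |β|⁻¹ v_{c₁}(β₀⁻¹τ)`; similarly for the finite
approximations. -/
theorem continuation {A : Type} [Fintype A] [DecidableEq A]
    (σ : A → List A) (hprim : IEMWandering.Primitive σ)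
    (β : ℂ) (γ : A → ℂ) (hβ : 1 < ‖β‖)
    (hγ : IEMWandering.IsEigenvector σ β γ)
    (a : A) (τ : ℂ) (hτ : ‖τ‖ = 1) :
    (∀ x : ℕ → IEMWandering.Triple A, IEMWandering.InS σ a x →
      IEMWandering.zrep β γ x ∈ IEMWandering.ExtPts σ β γ a τ →
      IEMWandering.zrep β γ (IEMWandering.shiftS x) ∈
        IEMWandering.ExtPts σ β γ ((x 0).2.1) ((IEMWandering.unitDir β)⁻¹ * τ) ∧
      (τ * IEMWandering.zrep β γ x).re =
        (τ * β⁻¹ * IEMWandering.wordSum γ (x 0).1).re +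
          (‖β‖)⁻¹ *
            IEMWandering.vDir σ β γ ((x 0).2.1) ((IEMWandering.unitDir β)⁻¹ * τ)) ∧
    (∀ n : ℕ, 1 ≤ n → ∀ x : ℕ → IEMWandering.Triple A, IEMWandering.InS σ a x →
      IEMWandering.zrepN β γ n x ∈ IEMWandering.ExtPtsN σ β γ n a τ →
      IEMWandering.zrepN β γ (n - 1) (IEMWandering.shiftS x) ∈
        IEMWandering.ExtPtsN σ β γ (n - 1) ((x 0).2.1)
          ((IEMWandering.unitDir β)⁻¹ * τ) ∧
      (τ * IEMWandering.zrepN β γ n x).re =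
        (τ * β⁻¹ * IEMWandering.wordSum γ (x 0).1).re +
          (‖β‖)⁻¹ *
            IEMWandering.vDirN σ β γ (n - 1) ((x 0).2.1)
              ((IEMWandering.unitDir β)⁻¹ * τ)) := by
  classical
  set C : ℝ := ∑ b : A, ((σ b).map (fun l => ‖γ l‖)).sum with hCdef
  have hC : ∀ b, ((σ b).map (fun l => ‖γ l‖)).sum ≤ C := by
    intro b
    refine Finset.single_le_sum (f := fun b => ((σ b).map (fun l => ‖γ l‖)).sum)
      (fun b' _ => ?_) (Finset.mem_univ b)
    exact List.sum_nonneg (by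
      intro r hr
      obtain ⟨l, -, rfl⟩ := List.mem_map.1 hr
      exact norm_nonneg _)
  have hb0 : (0:ℝ) < ‖β‖ := lt_trans zero_lt_one hβ
  set K : ℝ := ∑' m : ℕ, C * (‖β‖)⁻¹ ^ (m+1) with hKdef
  have hterm_nonneg : ∀ m : ℕ, 0 ≤ C * (‖β‖)⁻¹ ^ (m+1) := by
    intro m
    have hC0 : 0 ≤ C := le_trans (by
      classical
      exact List.sum_nonneg (by
        intro r hr
        obtain ⟨l, -, rfl⟩ := List.mem_map.1 hr
        exact norm_nonneg _)) (hC a)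
    positivity
  have hzrep_bd : ∀ (c : A) (y : ℕ → IEMWandering.Triple A), IEMWandering.InS σ c y →
      ‖IEMWandering.zrep β γ y‖ ≤ K := by
    intro c y hy
    have hsn : Summable (fun m : ℕ => ‖β⁻¹ ^ (m+1) * IEMWandering.wordSum γ (y m).1‖) :=
      Summable.of_nonneg_of_le (fun m => norm_nonneg _)
        (IEMWandering.term_bound hβ hC hy) (IEMWandering.geom_summable hβ C)
    rw [IEMWandering.zrep]
    calc ‖∑' m : ℕ, β⁻¹ ^ (m+1) * IEMWandering.wordSum γ (y m).1‖
        ≤ ∑' m : ℕ, ‖β⁻¹ ^ (m+1) * IEMWandering.wordSum γ (y m).1‖ :=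
          norm_tsum_le_tsum_norm hsn
      _ ≤ K := Summable.tsum_le_tsum (IEMWandering.term_bound hβ hC hy) hsn
          (IEMWandering.geom_summable hβ C)
  have hzrepN_bd : ∀ (n : ℕ) (c : A) (y : ℕ → IEMWandering.Triple A),
      IEMWandering.InS σ c y → ‖IEMWandering.zrepN β γ n y‖ ≤ K := by
    intro n c y hy
    rw [IEMWandering.zrepN]
    calc ‖∑ m ∈ Finset.range n, β⁻¹ ^ (m+1) * IEMWandering.wordSum γ (y m).1‖
        ≤ ∑ m ∈ Finset.range n, ‖β⁻¹ ^ (m+1) * IEMWandering.wordSum γ (y m).1‖ :=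
          norm_sum_le _ _
      _ ≤ ∑ m ∈ Finset.range n, C * (‖β‖)⁻¹ ^ (m+1) :=
          Finset.sum_le_sum (fun m _ => IEMWandering.term_bound hβ hC hy m)
      _ ≤ K := Summable.sum_le_tsum (Finset.range n) (fun m _ => hterm_nonneg m)
          (IEMWandering.geom_summable hβ C)
  have hτ'1 : ‖(IEMWandering.unitDir β)⁻¹ * τ‖ = 1 := by
    rw [norm_mul, norm_inv, hτ, mul_one, IEMWandering.unitDir, norm_div,
      Complex.norm_real, Real.norm_eq_abs, abs_of_pos hb0, div_self (ne_of_gt hb0), inv_one]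
  constructor
  · intro x hx hext
    obtain ⟨hmem, hval⟩ := hext
    have hcore := IEMWandering.continuation_core (σ := σ) (γ := γ) hβ
      (IEMWandering.zrep β γ) (IEMWandering.zrep β γ)
      (fun y hy => IEMWandering.zrep_rec (IEMWandering.zrep_summable hβ hC hy)) hx
      (IEMWandering.Frac σ β γ a) (IEMWandering.Frac σ β γ ((x 0).2.1))
      (fun y hy => ⟨y, hy, rfl⟩) rfl
      (IEMWandering.bddBelow_re_image K τ hτ _ (by
        rintro z ⟨y, hy, rfl⟩
        exact hzrep_bd a y hy))
      (IEMWandering.bddBelow_re_image K _ hτ'1 _ (by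
        rintro z ⟨y, hy, rfl⟩
        exact hzrep_bd _ y hy))
      hval
    exact ⟨⟨hcore.1, hcore.2.1⟩, hcore.2.2⟩
  · intro n hn x hx hext
    obtain ⟨k, rfl⟩ : ∃ k, n = k + 1 := ⟨n - 1, (Nat.succ_pred_eq_of_pos hn).symm⟩
    simp only [Nat.add_sub_cancel]
    obtain ⟨hmem, hval⟩ := hext
    have hcore := IEMWandering.continuation_core (σ := σ) (γ := γ) hβ
      (IEMWandering.zrepN β γ (k+1)) (IEMWandering.zrepN β γ k)
      (fun y _ => IEMWandering.zrepN_rec k y) hx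
      (IEMWandering.FracN σ β γ (k+1) a) (IEMWandering.FracN σ β γ k ((x 0).2.1))
      (fun y hy => ⟨y, hy, rfl⟩) rfl
      (IEMWandering.bddBelow_re_image K τ hτ _ (by
        rintro z ⟨y, hy, rfl⟩
        exact hzrepN_bd (k+1) a y hy))
      (IEMWandering.bddBelow_re_image K _ hτ'1 _ (by
        rintro z ⟨y, hy, rfl⟩
        exact hzrepN_bd k _ y hy))
      hval
    exact ⟨⟨hcore.1, hcore.2.1⟩, hcore.2.2⟩
end
end

section
/- (Exponential approximation.) Let a ∈ 𝒜 and τ ∈ S¹. For all n ≥ 1, |v_a^{(n)}(τ) − v_a(τ)| ≤ C |β|^{-n}, where C = max{ −v_b(τ') : b ∈ 𝒜, τ' ∈ S¹ } < ∞. -/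
open Complex MeasureTheory Filter Set
open scoped BigOperators

noncomputable section

open Complex Filter Set
open IEMWandering

namespace ExpApproxAux

variable {A : Type} [Fintype A] [DecidableEq A]

lemma list_norm_sum_le (l : List ℂ) : ‖l.sum‖ ≤ (l.map norm).sum := by
  induction l with
  | nil => simp
  | cons h t ih =>
    simp only [List.sum_cons, List.map_cons]
    exact (norm_add_le _ _).trans (by linarith)

/-- total `γ`-mass bound -/
def Bc (σ : A → List A) (γ : A → ℂ) : ℝ :=
  ∑ b : A, ((σ b).map (fun i => ‖γ i‖)).sum

lemma Bc_nonneg (σ : A → List A) (γ : A → ℂ) : 0 ≤ Bc σ γ := by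
  apply Finset.sum_nonneg
  intro b _
  apply List.sum_nonneg
  intro x hx
  simp only [List.mem_map] at hx
  obtain ⟨i, _, rfl⟩ := hx
  exact norm_nonneg _

lemma wordSum_prefix_bound (σ : A → List A) (γ : A → ℂ) {b : A} {p : List A} {c : A}
    {s : List A} (h : σ b = p ++ c :: s) : ‖wordSum γ p‖ ≤ Bc σ γ := by
  have h1 : ‖wordSum γ p‖ ≤ (p.map (fun i => ‖γ i‖)).sum := by
    have := list_norm_sum_le (p.map γ)
    simpa [wordSum, List.map_map, Function.comp_def] using this
  have h2 : (p.map (fun i => ‖γ i‖)).sum ≤ ((σ b).map (fun i => ‖γ i‖)).sum := by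
    rw [h, List.map_append, List.sum_append]
    have : 0 ≤ ((c :: s).map (fun i => ‖γ i‖)).sum := by
      apply List.sum_nonneg
      intro x hx
      simp only [List.mem_map] at hx
      obtain ⟨i, _, rfl⟩ := hx
      exact norm_nonneg _
    linarith
  have h3 : ((σ b).map (fun i => ‖γ i‖)).sum ≤ Bc σ γ := by
    apply Finset.single_le_sum (f := fun b => ((σ b).map (fun i => ‖γ i‖)).sum)
      (fun b _ => ?_) (Finset.mem_univ b)
    apply List.sum_nonneg
    intro x hx
    simp only [List.mem_map] at hx
    obtain ⟨i, _, rfl⟩ := hx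
    exact norm_nonneg _
  linarith

lemma InS_bound {σ : A → List A} {γ : A → ℂ} {b : A} {x : ℕ → Triple A}
    (hx : InS σ b x) (m : ℕ) : ‖wordSum γ (x m).1‖ ≤ Bc σ γ := by
  cases m with
  | zero => exact wordSum_prefix_bound σ γ hx.1
  | succ k => exact wordSum_prefix_bound σ γ (hx.2 k)

variable {σ : A → List A} {β : ℂ} {γ : A → ℂ}

lemma r_lt_one (hβ : 1 < ‖β‖) : (‖β‖)⁻¹ < 1 :=
  inv_lt_one_of_one_lt₀ hβ

lemma r_nonneg (β : ℂ) : 0 ≤ (‖β‖)⁻¹ := by positivity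

lemma norm_term_bound (hβ : 1 < ‖β‖) {b : A} {x : ℕ → Triple A}
    (hx : InS σ b x) (m : ℕ) :
    ‖β⁻¹ ^ (m + 1) * wordSum γ (x m).1‖ ≤
      (Bc σ γ * (‖β‖)⁻¹) * (‖β‖)⁻¹ ^ m := by
  rw [norm_mul, norm_pow]
  have h1 : ‖β⁻¹‖ = (‖β‖)⁻¹ := by
    rw [norm_inv]
  rw [h1, pow_succ]
  have hb := InS_bound (γ := γ) hx m
  have hr := r_nonneg β
  calc (‖β‖)⁻¹ ^ m * (‖β‖)⁻¹ * ‖wordSum γ (x m).1‖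
      ≤ (‖β‖)⁻¹ ^ m * (‖β‖)⁻¹ * Bc σ γ := by
        apply mul_le_mul_of_nonneg_left hb (by positivity)
    _ = (Bc σ γ * (‖β‖)⁻¹) * (‖β‖)⁻¹ ^ m := by ring

lemma summable_zrep (hβ : 1 < ‖β‖) {b : A} {x : ℕ → Triple A}
    (hx : InS σ b x) :
    Summable (fun m => β⁻¹ ^ (m + 1) * wordSum γ (x m).1) := by
  apply Summable.of_norm_bounded (Summable.mul_left _
    (summable_geometric_of_lt_one (r_nonneg β) (r_lt_one hβ)))
  exact norm_term_bound hβ hx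

/-- Constant bounding `‖zrep‖` and `‖zrepN‖`. -/
def Kc (σ : A → List A) (β : ℂ) (γ : A → ℂ) : ℝ :=
  (Bc σ γ * (‖β‖)⁻¹) * (1 - (‖β‖)⁻¹)⁻¹

lemma Kc_nonneg (hβ : 1 < ‖β‖) : 0 ≤ Kc σ β γ := by
  have h1 := Bc_nonneg σ γ
  have h2 := r_nonneg β
  have h3 : (0:ℝ) < 1 - (‖β‖)⁻¹ := by
    have := r_lt_one (β := β) hβ; linarith
  exact mul_nonneg (mul_nonneg h1 h2) (le_of_lt (inv_pos.mpr h3))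

lemma norm_zrep_le (hβ : 1 < ‖β‖) {b : A} {x : ℕ → Triple A}
    (hx : InS σ b x) : ‖zrep β γ x‖ ≤ Kc σ β γ := by
  have hs := summable_zrep (γ := γ) hβ hx
  have hns : Summable (fun m => ‖β⁻¹ ^ (m + 1) * wordSum γ (x m).1‖) :=
    Summable.of_nonneg_of_le (fun m => norm_nonneg _) (norm_term_bound hβ hx)
      (Summable.mul_left _ (summable_geometric_of_lt_one (r_nonneg β) (r_lt_one hβ)))
  calc ‖zrep β γ x‖ ≤ ∑' m, ‖β⁻¹ ^ (m + 1) * wordSum γ (x m).1‖ :=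
        norm_tsum_le_tsum_norm hns
    _ ≤ ∑' m, (Bc σ γ * (‖β‖)⁻¹) * (‖β‖)⁻¹ ^ m := by
        apply Summable.tsum_le_tsum (norm_term_bound hβ hx) hns
        exact Summable.mul_left _ (summable_geometric_of_lt_one (r_nonneg β) (r_lt_one hβ))
    _ = Kc σ β γ := by
        rw [tsum_mul_left, tsum_geometric_of_lt_one (r_nonneg β) (r_lt_one hβ), Kc]

lemma norm_zrepN_le (hβ : 1 < ‖β‖) {b : A} {x : ℕ → Triple A}
    (hx : InS σ b x) (n : ℕ) : ‖zrepN β γ n x‖ ≤ Kc σ β γ := by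
  have hns : Summable (fun m => ‖β⁻¹ ^ (m + 1) * wordSum γ (x m).1‖) :=
    Summable.of_nonneg_of_le (fun m => norm_nonneg _) (norm_term_bound hβ hx)
      (Summable.mul_left _ (summable_geometric_of_lt_one (r_nonneg β) (r_lt_one hβ)))
  calc ‖zrepN β γ n x‖ ≤ ∑ m ∈ Finset.range n, ‖β⁻¹ ^ (m + 1) * wordSum γ (x m).1‖ :=
        norm_sum_le _ _
    _ ≤ ∑' m, ‖β⁻¹ ^ (m + 1) * wordSum γ (x m).1‖ :=
        Summable.sum_le_tsum _ (fun i _ => norm_nonneg _) hns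
    _ ≤ ∑' m, (Bc σ γ * (‖β‖)⁻¹) * (‖β‖)⁻¹ ^ m := by
        apply Summable.tsum_le_tsum (norm_term_bound hβ hx) hns
        exact Summable.mul_left _ (summable_geometric_of_lt_one (r_nonneg β) (r_lt_one hβ))
    _ = Kc σ β γ := by
        rw [tsum_mul_left, tsum_geometric_of_lt_one (r_nonneg β) (r_lt_one hβ), Kc]

/-- shifted sequence is in `InS` at the appropriate letter -/
lemma InS_shift {b : A} {x : ℕ → Triple A} (hx : InS σ b x) (k : ℕ) :
    InS σ ((x k).2.1) (fun m => x (m + (k + 1))) := by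
  constructor
  · simpa using hx.2 k
  · intro m
    simpa [Nat.add_right_comm] using hx.2 (m + (k + 1))

/-- splitting of `zrep` -/
lemma zrep_split (hβ : 1 < ‖β‖) {b : A} {x : ℕ → Triple A}
    (hx : InS σ b x) (n : ℕ) :
    zrep β γ x = zrepN β γ n x + β⁻¹ ^ n * zrep β γ (fun m => x (m + n)) := by
  have hs := summable_zrep (γ := γ) hβ hx
  have hsplit := Summable.sum_add_tsum_nat_add (f := fun m => β⁻¹ ^ (m + 1) * wordSum γ (x m).1) n hs
  rw [zrep, zrepN, ← hsplit]
  congr 1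
  rw [zrep, ← tsum_mul_left]
  congr 1
  funext m
  rw [← mul_assoc, ← pow_add]
  congr 2
  ring

/-- canonical all-empty-prefix expansion -/
def canon (σ : A → List A) (h : ∀ b, σ b ≠ []) (b : A) : ℕ → Triple A :=
  fun m => Nat.rec (motive := fun _ => Triple A)
    (([] : List A), ((σ b).head (h b), (σ b).tail))
    (fun _ p => (([] : List A), ((σ p.2.1).head (h p.2.1), (σ p.2.1).tail))) m

lemma canon_fst (h : ∀ b, σ b ≠ []) (b : A) (m : ℕ) : ((canon σ h b) m).1 = [] := by
  cases m <;> rfl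

lemma canon_InS (h : ∀ b, σ b ≠ []) (b : A) : InS σ b (canon σ h b) := by
  constructor
  · show σ b = [] ++ (σ b).head (h b) :: (σ b).tail
    simp [List.cons_head_tail]
  · intro m
    have : ((canon σ h b) (m+1)) =
        (([] : List A), ((σ ((canon σ h b) m).2.1).head (h _), (σ ((canon σ h b) m).2.1).tail)) := rfl
    rw [this]
    show σ _ = [] ++ _ :: _
    simp [List.cons_head_tail]

lemma canon_zrep (h : ∀ b, σ b ≠ []) (b : A) : zrep β γ (canon σ h b) = 0 := by
  rw [zrep]
  convert tsum_zero with m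
  rw [canon_fst]
  simp [wordSum]

/-- glue a head with a tail -/
def glue (x : ℕ → Triple A) (n : ℕ) (y : ℕ → Triple A) : ℕ → Triple A :=
  fun m => if m < n then x m else y (m - n)

lemma glue_InS {b : A} {x y : ℕ → Triple A} {k : ℕ}
    (hx : InS σ b x) (hy : InS σ ((x k).2.1) y) :
    InS σ b (glue x (k + 1) y) := by
  constructor
  · show σ b = (glue x (k+1) y 0).1 ++ _
    simp only [glue, Nat.zero_lt_succ, if_pos]
    exact hx.1
  · intro m
    rcases lt_trichotomy (m + 1) (k + 1) with h | h | h
    · have hm : m < k + 1 := by omega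
      simp only [glue, if_pos h, if_pos hm]
      exact hx.2 m
    · have hm : m < k + 1 := by omega
      have hmk : m = k := by omega
      simp only [glue, if_pos hm, if_neg (by omega : ¬ (m + 1 < k + 1))]
      subst hmk
      have : m + 1 - (m + 1) = 0 := by omega
      rw [this]
      exact hy.1
    · have hm : ¬ (m < k + 1) := by omega
      simp only [glue, if_neg hm, if_neg (by omega : ¬ (m + 1 < k + 1))]
      have h1 : m + 1 - (k + 1) = (m - (k+1)) + 1 := by omega
      rw [h1]
      exact hy.2 (m - (k+1))

lemma glue_zrepN {x y : ℕ → Triple A} {n : ℕ} :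
    zrepN β γ n (glue x n y) = zrepN β γ n x := by
  unfold zrepN
  apply Finset.sum_congr rfl
  intro m hm
  rw [Finset.mem_range] at hm
  simp [glue, if_pos hm]

lemma glue_shift {x y : ℕ → Triple A} {n : ℕ} :
    (fun m => glue x n y (m + n)) = y := by
  funext m
  simp [glue, if_neg (by omega : ¬ (m + n < n))]

end ExpApproxAux

/-- **Lemma 5.6** (exponential approximation). For all `n ≥ 1`,
`|v_a^{(n)}(τ) − v_a(τ)| ≤ C |β|^{−n}`, where
`C = max{−v_b(τ') : b ∈ 𝒜, τ' ∈ S¹} < ∞`. -/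
theorem exponential_approximation {A : Type} [Fintype A] [DecidableEq A]
    (σ : A → List A) (hprim : IEMWandering.Primitive σ)
    (β : ℂ) (γ : A → ℂ) (hβ : 1 < ‖β‖)
    (hγ : IEMWandering.IsEigenvector σ β γ)
    (a : A) (τ : ℂ) (hτ : ‖τ‖ = 1)
    (C : ℝ) (hC : C = sSup { r : ℝ | ∃ (b : A) (τ' : ℂ),
      ‖τ'‖ = 1 ∧ r = -IEMWandering.vDir σ β γ b τ' }) :
    ∀ n : ℕ, 1 ≤ n →
      |IEMWandering.vDirN σ β γ n a τ - IEMWandering.vDir σ β γ a τ| ≤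
        C * (‖β‖)⁻¹ ^ n := by
  classical
  open IEMWandering ExpApproxAux in
  intro n hn
  by_cases hne : ∀ b, σ b ≠ []
  · -- main case
    set K := Kc σ β γ with hK
    have hr0 := r_nonneg β
    have hr1 := r_lt_one (β := β) hβ
    -- lower bound on elements of the Frac images
    have him : ∀ (b : A) (τ' : ℂ), ‖τ'‖ = 1 →
        ∀ w ∈ ((fun z => (τ' * z).re) '' Frac σ β γ b), -K ≤ w := by
      rintro b τ' hτ' w ⟨z, ⟨x, hx, rfl⟩, rfl⟩
      have h1 : ‖τ' * zrep β γ x‖ = ‖zrep β γ x‖ := by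
        rw [norm_mul, hτ', one_mul]
      have h2 := norm_zrep_le (σ := σ) (γ := γ) hβ hx
      have h3 : |(τ' * zrep β γ x).re| ≤ ‖τ' * zrep β γ x‖ := by
        exact Complex.abs_re_le_norm _
      have h4 := neg_abs_le ((τ' * zrep β γ x).re)
      simp only [hK] at h2 ⊢
      linarith
    have himN : ∀ (τ' : ℂ), ‖τ'‖ = 1 →
        ∀ w ∈ ((fun z => (τ' * z).re) '' FracN σ β γ n a), -K ≤ w := by
      rintro τ' hτ' w ⟨z, ⟨x, hx, rfl⟩, rfl⟩
      have h1 : ‖τ' * zrepN β γ n x‖ = ‖zrepN β γ n x‖ := by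
        rw [norm_mul, hτ', one_mul]
      have h2 := norm_zrepN_le (σ := σ) (γ := γ) hβ hx n
      have h3 : |(τ' * zrepN β γ n x).re| ≤ ‖τ' * zrepN β γ n x‖ := by
        exact Complex.abs_re_le_norm _
      have h4 := neg_abs_le ((τ' * zrepN β γ n x).re)
      simp only [hK] at h2 ⊢
      linarith
    have hFracNe : ∀ b : A, (Frac σ β γ b).Nonempty := fun b =>
      ⟨zrep β γ (canon σ hne b), canon σ hne b, canon_InS hne b, rfl⟩
    have hImNe : ∀ (b : A) (τ' : ℂ),
        ((fun z => (τ' * z).re) '' Frac σ β γ b).Nonempty := fun b τ' =>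
      (hFracNe b).image _
    have hBdd : ∀ (b : A) (τ' : ℂ), ‖τ'‖ = 1 →
        BddBelow ((fun z => (τ' * z).re) '' Frac σ β γ b) := fun b τ' hτ' =>
      ⟨-K, fun w hw => him b τ' hτ' w hw⟩
    have hvge : ∀ (b : A) (τ' : ℂ), ‖τ'‖ = 1 →
        -K ≤ IEMWandering.vDir σ β γ b τ' := fun b τ' hτ' =>
      le_csInf (hImNe b τ') (him b τ' hτ')
    have hSetBdd : BddAbove { r : ℝ | ∃ (b : A) (τ' : ℂ),
        ‖τ'‖ = 1 ∧ r = -IEMWandering.vDir σ β γ b τ' } := by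
      refine ⟨K, ?_⟩
      rintro w ⟨b, τ', hτ', rfl⟩
      have := hvge b τ' hτ'
      linarith
    have hCub : ∀ (b : A) (τ' : ℂ), ‖τ'‖ = 1 →
        -IEMWandering.vDir σ β γ b τ' ≤ C := by
      intro b τ' hτ'
      rw [hC]
      exact le_csSup hSetBdd ⟨b, τ', hτ', rfl⟩
    have hzero_mem : (0 : ℂ) ∈ Frac σ β γ a :=
      ⟨canon σ hne a, canon_InS hne a, canon_zrep hne a⟩
    have hva1 : IEMWandering.vDir σ β γ a 1 ≤ 0 := by
      have hm : (0 : ℝ) ∈ ((fun z => ((1 : ℂ) * z).re) '' Frac σ β γ a) :=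
        ⟨0, hzero_mem, by simp⟩
      simpa [IEMWandering.vDir] using csInf_le (hBdd a 1 (by simp)) hm
    have hC0 : 0 ≤ C := le_trans (by linarith) (hCub a 1 (by simp))
    obtain ⟨k, rfl⟩ : ∃ k, n = k + 1 := ⟨n - 1, by omega⟩
    -- direction A : vDir ≤ vDirN
    have hsubset : FracN σ β γ (k + 1) a ⊆ Frac σ β γ a := by
      rintro z ⟨x, hx, rfl⟩
      refine ⟨glue x (k + 1) (canon σ hne ((x k).2.1)),
        glue_InS hx (canon_InS hne _), ?_⟩
      rw [zrep_split hβ (glue_InS hx (canon_InS hne _)) (k + 1), glue_shift,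
        canon_zrep, glue_zrepN]
      ring
    have hA : IEMWandering.vDir σ β γ a τ ≤ IEMWandering.vDirN σ β γ (k + 1) a τ := by
      apply csInf_le_csInf (hBdd a τ hτ)
      · exact ⟨(τ * zrepN β γ (k+1) (canon σ hne a)).re,
          zrepN β γ (k+1) (canon σ hne a), ⟨canon σ hne a, canon_InS hne a, rfl⟩, rfl⟩
      · exact Set.image_mono hsubset
    -- direction B
    set τ' : ℂ := τ * ((‖β‖ : ℂ) / β) ^ (k + 1) with hτ'def
    have hβ0 : β ≠ 0 := by
      intro h; rw [h] at hβ; simp at hβ; linarith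
    have habsβ : ‖((‖β‖ : ℂ))‖ = ‖β‖ := by
      rw [Complex.norm_real, Real.norm_eq_abs, _root_.abs_of_nonneg (norm_nonneg _)]
    have hτ'abs : ‖τ'‖ = 1 := by
      rw [hτ'def, norm_mul, norm_pow, norm_div, habsβ, hτ, div_self
        (by positivity : ‖β‖ ≠ 0), one_pow, mul_one]
    have hB : IEMWandering.vDirN σ β γ (k + 1) a τ - C * (‖β‖)⁻¹ ^ (k + 1) ≤
        IEMWandering.vDir σ β γ a τ := by
      apply le_csInf (hImNe a τ)
      rintro w ⟨z, ⟨x, hx, rfl⟩, rfl⟩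
      have hy := InS_shift hx k
      have hsplit := zrep_split (σ := σ) (γ := γ) hβ hx (k + 1)
      have habs0 : ((‖β‖ : ℝ) : ℂ) ≠ 0 := by
        simpa using (by positivity : ‖β‖ ≠ 0)
      have hscal : (((‖β‖)⁻¹ ^ (k + 1) : ℝ) : ℂ) *
          ((‖β‖ : ℂ) / β) ^ (k + 1) = β⁻¹ ^ (k + 1) := by
        push_cast
        rw [← mul_pow]
        congr 1
        field_simp
      have hkey : τ * zrep β γ x = τ * zrepN β γ (k + 1) x +
          (((‖β‖)⁻¹ ^ (k + 1) : ℝ) : ℂ) *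
            (τ' * zrep β γ (fun m => x (m + (k + 1)))) := by
        rw [hsplit, mul_add, hτ'def]
        congr 1
        rw [← hscal]
        ring
      have hre : (τ * zrep β γ x).re = (τ * zrepN β γ (k + 1) x).re +
          (‖β‖)⁻¹ ^ (k + 1) * (τ' * zrep β γ (fun m => x (m + (k + 1)))).re := by
        rw [hkey, Complex.add_re, Complex.re_ofReal_mul]
      have h5 : IEMWandering.vDirN σ β γ (k + 1) a τ ≤ (τ * zrepN β γ (k + 1) x).re := by
        apply csInf_le ⟨-K, fun w hw => himN τ hτ w hw⟩
        exact ⟨zrepN β γ (k + 1) x, ⟨x, hx, rfl⟩, rfl⟩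
      have h6 : IEMWandering.vDir σ β γ ((x k).2.1) τ' ≤ (τ' * zrep β γ (fun m => x (m + (k + 1)))).re :=
        csInf_le (hBdd _ τ' hτ'abs) ⟨zrep β γ (fun m => x (m + (k + 1))), ⟨fun m => x (m + (k + 1)), hy, rfl⟩, rfl⟩
      have h7 : -C ≤ (τ' * zrep β γ (fun m => x (m + (k + 1)))).re := by
        have := hCub ((x k).2.1) τ' hτ'abs
        linarith
      have h8 : (‖β‖)⁻¹ ^ (k + 1) * (-C) ≤
          (‖β‖)⁻¹ ^ (k + 1) * (τ' * zrep β γ (fun m => x (m + (k + 1)))).re :=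
        mul_le_mul_of_nonneg_left h7 (by positivity)
      nlinarith [h5, h8, hre]
    have hpow : 0 ≤ C * (‖β‖)⁻¹ ^ (k + 1) :=
      mul_nonneg hC0 (by positivity)
    rw [abs_le]
    constructor <;> linarith
  · -- degenerate case
    push_neg at hne
    obtain ⟨b0, hb0⟩ := hne
    obtain ⟨N, hN⟩ := hprim
    have hN0 : N = 0 := by
      by_contra h
      obtain ⟨M, rfl⟩ : ∃ M, N = M + 1 := ⟨N - 1, by omega⟩
      have hmem : a ∈ substIter σ (M + 1) b0 := hN a b0
      rw [substIter, hb0] at hmem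
      simp at hmem
    subst hN0
    have hss : ∀ x y : A, x = y := by
      intro x y
      have := hN x y
      simpa [substIter] using this
    have hσempty : ∀ c : A, σ c = [] := fun c => (hss c b0) ▸ hb0
    have hFracEmpty : ∀ c : A, Frac σ β γ c = ∅ := by
      intro c
      ext z
      simp only [Frac, Set.mem_setOf_eq, Set.mem_empty_iff_false, iff_false]
      rintro ⟨x, hx, -⟩
      have h := hx.1
      rw [hσempty c] at h
      exact List.cons_ne_nil _ _ (List.append_eq_nil_iff.mp h.symm).2
    have hFracNEmpty : FracN σ β γ n a = ∅ := by
      ext z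
      simp only [FracN, Set.mem_setOf_eq, Set.mem_empty_iff_false, iff_false]
      rintro ⟨x, hx, -⟩
      have h := hx.1
      rw [hσempty a] at h
      exact List.cons_ne_nil _ _ (List.append_eq_nil_iff.mp h.symm).2
    have hv : ∀ (c : A) (τ'' : ℂ), IEMWandering.vDir σ β γ c τ'' = 0 := by
      intro c τ''
      rw [IEMWandering.vDir, hFracEmpty, Set.image_empty, Real.sInf_empty]
    have hvN : IEMWandering.vDirN σ β γ n a τ = 0 := by
      rw [IEMWandering.vDirN, hFracNEmpty, Set.image_empty, Real.sInf_empty]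
    have hCset : { r : ℝ | ∃ (b : A) (τ'' : ℂ),
        ‖τ''‖ = 1 ∧ r = -IEMWandering.vDir σ β γ b τ'' } = {0} := by
      ext w
      simp only [Set.mem_setOf_eq, Set.mem_singleton_iff]
      constructor
      · rintro ⟨b, τ'', -, rfl⟩
        rw [hv]; ring
      · rintro rfl
        exact ⟨a, 1, by simp, by rw [hv]; ring⟩
    have hC0 : C = 0 := by rw [hC, hCset, csSup_singleton]
    rw [hvN, hv a τ, hC0]
    simp
end
end

section
/- Let σ be the primitive substitution associated with a self-similar interval exchange map, β an eigenvalue of its matrix M with |β| > 1 such that β₀ = β/|β| is not a root of unity, and γ an eigenvector for β. Then: (i) for every τ ∈ S¹ there exists a ∈ 𝒜 such that the set E_a^*(τ) of limit extreme points is nonempty; (ii) if E_a^*(τ) is nonempty for some a ∈ 𝒜 and τ ∈ S¹, then E_a^*(τ) = E_a(τ). -/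
open Complex MeasureTheory Filter Set
open scoped BigOperators

noncomputable section

namespace IEMWandering
namespace Aux

variable {A : Type} [Fintype A] [DecidableEq A]

/-- Concatenate the first `j` triples of `w` with `x`. -/
def splice (j : ℕ) (w x : ℕ → Triple A) : ℕ → Triple A :=
  fun m => if m < j then w m else x (m - j)

/-- Left shift by `j`. -/
def shiftn (j : ℕ) (x : ℕ → Triple A) : ℕ → Triple A := fun m => x (m + j)

lemma splice_shiftn (j : ℕ) (w : ℕ → Triple A) : splice j w (shiftn j w) = w := by
  funext m
  simp only [splice, shiftn]
  split
  · rfl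
  · congr 1; omega

lemma shiftn_splice (j : ℕ) (w x : ℕ → Triple A) : shiftn j (splice j w x) = x := by
  funext m
  simp only [splice, shiftn]
  rw [if_neg (by omega)]
  congr 1; omega

variable (σ : A → List A) (β : ℂ) (γ : A → ℂ)

lemma splice_InS {a b : A} {w x : ℕ → Triple A} {j : ℕ} (hj : 1 ≤ j)
    (hw : InS σ b w) (hx : InS σ a x) (hc : (w (j-1)).2.1 = a) :
    InS σ b (splice j w x) := by
  constructor
  · have h0 : splice j w x 0 = w 0 := if_pos (by omega)
    rw [h0]; exact hw.1
  · intro m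
    rcases lt_trichotomy (m+1) j with h | h | h
    · have h1 : splice j w x m = w m := if_pos (by omega)
      have h2 : splice j w x (m+1) = w (m+1) := if_pos h
      rw [h1, h2]; exact hw.2 m
    · have h1 : splice j w x m = w m := if_pos (by omega)
      have h2 : splice j w x (m+1) = x 0 := by
        simp only [splice]; rw [if_neg (by omega)]; congr 1; omega
      rw [h1, h2]
      have hm : m = j - 1 := by omega
      rw [hm, hc]; exact hx.1
    · have h1 : splice j w x m = x (m - j) := by
        simp only [splice]; rw [if_neg (by omega)]
      have h2 : splice j w x (m+1) = x (m - j + 1) := by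
        simp only [splice]; rw [if_neg (by omega)]; congr 1; omega
      rw [h1, h2]; exact hx.2 (m - j)

/-- The letter such that `shiftn i x ∈ 𝒮_(letterAt a x i)`. -/
def letterAt (a : A) (x : ℕ → Triple A) : ℕ → A
  | 0 => a
  | i+1 => (x i).2.1

lemma shiftn_InS {a : A} {x : ℕ → Triple A} (hx : InS σ a x) (i : ℕ) :
    InS σ (letterAt a x i) (shiftn i x) := by
  constructor
  · show σ (letterAt a x i) = (x (0+i)).1 ++ (x (0+i)).2.1 :: (x (0+i)).2.2
    rw [Nat.zero_add]
    cases i with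
    | zero => exact hx.1
    | succ j => exact hx.2 j
  · intro m
    show σ ((x (m+i)).2.1) = (x (m+1+i)).1 ++ (x (m+1+i)).2.1 :: (x (m+1+i)).2.2
    have h : m + 1 + i = (m + i) + 1 := by omega
    rw [h]
    exact hx.2 (m+i)

/-- A bound for `|γ|`. -/
def Gb : ℝ := ∑ b : A, ‖γ b‖

/-- A bound for the lengths of the `σ b`. -/
def Lb : ℝ := ∑ b : A, ((σ b).length : ℝ)

/-- A bound for `|γ(p)|` over all prefixes of decompositions. -/
def Cb : ℝ := Lb σ * Gb γ

/-- `|β|⁻¹`. -/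
def rβ : ℝ := (‖β‖)⁻¹

/-- The tail-bound constant. -/
def Cbig : ℝ := Cb σ γ * (1 - rβ β)⁻¹

lemma Gb_nonneg : 0 ≤ Gb γ :=
  Finset.sum_nonneg fun _ _ => norm_nonneg _

lemma le_Gb (c : A) : ‖γ c‖ ≤ Gb γ :=
  Finset.single_le_sum (f := fun b => ‖γ b‖)
    (fun _ _ => norm_nonneg _) (Finset.mem_univ c)

lemma Lb_nonneg : 0 ≤ Lb σ :=
  Finset.sum_nonneg fun _ _ => Nat.cast_nonneg _

lemma le_Lb (b : A) : ((σ b).length : ℝ) ≤ Lb σ :=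
  Finset.single_le_sum (f := fun b => ((σ b).length : ℝ))
    (fun _ _ => Nat.cast_nonneg _) (Finset.mem_univ b)

lemma Cb_nonneg : 0 ≤ Cb σ γ := mul_nonneg (Lb_nonneg σ) (Gb_nonneg γ)

lemma abs_wordSum_le (p : List A) :
    ‖wordSum γ p‖ ≤ (p.length : ℝ) * Gb γ := by
  induction p with
  | nil => simp [wordSum]
  | cons c p ih =>
    have h : wordSum γ (c :: p) = γ c + wordSum γ p := by simp [wordSum]
    calc ‖wordSum γ (c :: p)‖ ≤ ‖γ c‖ + ‖wordSum γ p‖ := by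
          rw [h]; exact norm_add_le _ _
      _ ≤ Gb γ + (p.length : ℝ) * Gb γ := add_le_add (le_Gb γ c) ih
      _ = ((c :: p).length : ℝ) * Gb γ := by push_cast [List.length_cons]; ring

lemma abs_prefix_le {b : A} {d : Triple A} (h : IsDecomp σ b d) :
    ‖wordSum γ d.1‖ ≤ Cb σ γ := by
  have hlen : (d.1.length : ℝ) ≤ ((σ b).length : ℝ) := by
    have : (σ b).length = d.1.length + (d.2.1 :: d.2.2).length := by
      rw [h]; exact List.length_append
    exact_mod_cast by omega
  calc ‖wordSum γ d.1‖ ≤ (d.1.length : ℝ) * Gb γ := abs_wordSum_le γ d.1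
    _ ≤ Lb σ * Gb γ := mul_le_mul_of_nonneg_right (le_trans hlen (le_Lb σ b)) (Gb_nonneg γ)

lemma InS_decomp {a : A} {x : ℕ → Triple A} (hx : InS σ a x) (m : ℕ) :
    ∃ b : A, IsDecomp σ b (x m) := by
  cases m with
  | zero => exact ⟨a, hx.1⟩
  | succ m' => exact ⟨(x m').2.1, hx.2 m'⟩

variable {β}

lemma rβ_nonneg : 0 ≤ rβ β := inv_nonneg.mpr (norm_nonneg _)

lemma rβ_lt_one (hβ : 1 < ‖β‖) : rβ β < 1 :=
  inv_lt_one_of_one_lt₀ hβ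

lemma rβ_pos (hβ : 1 < ‖β‖) : 0 < rβ β :=
  inv_pos.mpr (lt_trans one_pos hβ)

lemma Cbig_nonneg (hβ : 1 < ‖β‖) : 0 ≤ Cbig σ β γ :=
  mul_nonneg (Cb_nonneg σ γ) (inv_nonneg.mpr (by have := rβ_lt_one hβ; linarith))

lemma abs_term_le {a : A} {x : ℕ → Triple A} (hx : InS σ a x) (m : ℕ) :
    ‖β⁻¹ ^ (m+1) * wordSum γ (x m).1‖ ≤ Cb σ γ * rβ β ^ (m+1) := by
  obtain ⟨b, hb⟩ := InS_decomp σ hx m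
  have h1 : ‖β⁻¹ ^ (m+1) * wordSum γ (x m).1‖
      = rβ β ^ (m+1) * ‖wordSum γ (x m).1‖ := by
    rw [norm_mul, norm_pow, norm_inv]
    rfl
  rw [h1, mul_comm]
  exact mul_le_mul_of_nonneg_right (abs_prefix_le σ γ hb) (pow_nonneg (rβ_nonneg) _)

lemma summable_geom_term (hβ : 1 < ‖β‖) :
    Summable (fun m : ℕ => Cb σ γ * rβ β ^ (m+1)) := by
  have h : Summable (fun m : ℕ => (Cb σ γ * rβ β) * rβ β ^ m) :=
    (summable_geometric_of_lt_one (rβ_nonneg) (rβ_lt_one hβ)).mul_left _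
  exact h.congr fun m => by rw [pow_succ]; ring

lemma summable_term (hβ : 1 < ‖β‖) {a : A} {x : ℕ → Triple A} (hx : InS σ a x) :
    Summable (fun m : ℕ => β⁻¹ ^ (m+1) * wordSum γ (x m).1) :=
  Summable.of_norm_bounded (summable_geom_term σ γ hβ) (abs_term_le σ γ hx)

lemma zrep_eq_add (hβ : 1 < ‖β‖) {a : A} {x : ℕ → Triple A}
    (hx : InS σ a x) (j : ℕ) :
    zrep β γ x = zrepN β γ j x + β⁻¹ ^ j * zrep β γ (shiftn j x) := by
  have hsum := summable_term σ γ hβ hx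
  have h := Summable.sum_add_tsum_nat_add j hsum
  have h2 : (∑' i : ℕ, β⁻¹ ^ (i + j + 1) * wordSum γ (x (i + j)).1)
      = β⁻¹ ^ j * zrep β γ (shiftn j x) := by
    rw [zrep, ← tsum_mul_left]
    apply tsum_congr
    intro i
    show β⁻¹ ^ (i + j + 1) * wordSum γ (x (i + j)).1
      = β⁻¹ ^ j * (β⁻¹ ^ (i + 1) * wordSum γ (x (i + j)).1)
    rw [← mul_assoc, ← pow_add]
    congr 2
    omega
  rw [zrep, ← h, zrepN, h2]

lemma zrep_sub_zrepN (hβ : 1 < ‖β‖) {a : A} {x : ℕ → Triple A}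
    (hx : InS σ a x) (n : ℕ) :
    ‖zrep β γ x - zrepN β γ n x‖ ≤ Cbig σ β γ * rβ β ^ n := by
  have hsum := summable_term σ γ hβ hx
  have heq : zrep β γ x - zrepN β γ n x
      = ∑' i : ℕ, β⁻¹ ^ (i + n + 1) * wordSum γ (x (i + n)).1 := by
    have h := Summable.sum_add_tsum_nat_add n hsum
    rw [zrep, zrepN, ← h]; ring
  have hnorm : ∀ i : ℕ, ‖β⁻¹ ^ (i + n + 1) * wordSum γ (x (i + n)).1‖
      ≤ Cb σ γ * rβ β ^ (i + n + 1) := fun i => abs_term_le σ γ hx (i + n)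
  have hs1 : Summable (fun i : ℕ => ‖β⁻¹ ^ (i + n + 1) * wordSum γ (x (i + n)).1‖) := by
    apply Summable.of_nonneg_of_le (fun i => norm_nonneg _) hnorm
    exact ((summable_nat_add_iff n).mpr (summable_geom_term σ γ hβ)).congr
      (fun i => by ring_nf)
  have hs2 : Summable (fun i : ℕ => Cb σ γ * rβ β ^ (i + n + 1)) :=
    ((summable_nat_add_iff n).mpr (summable_geom_term σ γ hβ)).congr (fun i => by ring_nf)
  have h1 : ‖zrep β γ x - zrepN β γ n x‖
      ≤ ∑' i : ℕ, Cb σ γ * rβ β ^ (i + n + 1) := by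
    rw [heq]
    exact le_trans (norm_tsum_le_tsum_norm hs1) (Summable.tsum_le_tsum hnorm hs1 hs2)
  have h2 : (∑' i : ℕ, Cb σ γ * rβ β ^ (i + n + 1))
      = (Cb σ γ * rβ β ^ (n+1)) * (1 - rβ β)⁻¹ := by
    have : ∀ i : ℕ, Cb σ γ * rβ β ^ (i + n + 1) = (Cb σ γ * rβ β ^ (n+1)) * rβ β ^ i := by
      intro i; rw [show i + n + 1 = (n+1) + i from by omega, pow_add]; ring
    rw [tsum_congr this, tsum_mul_left, tsum_geometric_of_lt_one (rβ_nonneg) (rβ_lt_one hβ)]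
  refine le_trans h1 (le_of_eq_of_le h2 ?_)
  have hr0 := rβ_nonneg (β := β)
  have hr1 := rβ_lt_one (β := β) hβ
  have hC := Cb_nonneg σ γ
  have hpow : (0:ℝ) ≤ rβ β ^ n := pow_nonneg hr0 n
  have hinv : (0:ℝ) ≤ (1 - rβ β)⁻¹ := inv_nonneg.mpr (by linarith)
  calc Cb σ γ * rβ β ^ (n+1) * (1 - rβ β)⁻¹
      = (Cbig σ β γ * rβ β ^ n) * rβ β := by rw [Cbig, pow_succ]; ring
    _ ≤ (Cbig σ β γ * rβ β ^ n) * 1 := by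
        apply mul_le_mul_of_nonneg_left (le_of_lt hr1)
        exact mul_nonneg (Cbig_nonneg σ γ hβ) hpow
    _ = Cbig σ β γ * rβ β ^ n := mul_one _

lemma abs_zrep_le (hβ : 1 < ‖β‖) {a : A} {x : ℕ → Triple A} (hx : InS σ a x) :
    ‖zrep β γ x‖ ≤ Cbig σ β γ := by
  have h := zrep_sub_zrepN σ γ hβ hx 0
  simpa [zrepN] using h

lemma mem_frac {a : A} {x : ℕ → Triple A} (hx : InS σ a x) :
    zrep β γ x ∈ Frac σ β γ a := ⟨x, hx, rfl⟩

/-- The canonical expansion. -/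
def canonT (hσ : ∀ b, σ b ≠ []) (a : A) : ℕ → Triple A
  | 0 => ([], (σ a).head (hσ a), (σ a).tail)
  | n+1 => ([], (σ ((canonT hσ a n).2.1)).head (hσ _), (σ ((canonT hσ a n).2.1)).tail)

lemma canonT_InS (hσ : ∀ b, σ b ≠ []) (a : A) : InS σ a (canonT σ hσ a) := by
  constructor
  · show σ a = [] ++ (σ a).head (hσ a) :: (σ a).tail
    rw [List.nil_append, List.cons_head_tail]
  · intro m
    show σ ((canonT σ hσ a m).2.1)
      = [] ++ (σ ((canonT σ hσ a m).2.1)).head (hσ _) :: (σ ((canonT σ hσ a m).2.1)).tail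
    rw [List.nil_append, List.cons_head_tail]

lemma frac_nonempty (hσ : ∀ b, σ b ≠ []) (a : A) : (Frac σ β γ a).Nonempty :=
  ⟨_, mem_frac σ γ (canonT_InS σ hσ a)⟩

lemma bddBelow_im (hβ : 1 < ‖β‖) (a : A) (τ' : ℂ) :
    BddBelow ((fun z => (τ' * z).re) '' Frac σ β γ a) := by
  refine ⟨-(‖τ'‖ * Cbig σ β γ), ?_⟩
  rintro v ⟨z, ⟨x, hx, rfl⟩, rfl⟩
  simp only
  have h1 : |(τ' * zrep β γ x).re| ≤ ‖τ' * zrep β γ x‖ := Complex.abs_re_le_norm _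
  have h2 : ‖τ' * zrep β γ x‖ ≤ ‖τ'‖ * Cbig σ β γ := by
    rw [norm_mul]
    exact mul_le_mul_of_nonneg_left (abs_zrep_le σ γ hβ hx) (norm_nonneg _)
  have := neg_abs_le ((τ' * zrep β γ x).re)
  linarith
-- cSInf lemmas
lemma vDir_le (hβ : 1 < ‖β‖) {a : A} {τ' : ℂ} {z : ℂ} (hz : z ∈ Frac σ β γ a) :
    vDir σ β γ a τ' ≤ (τ' * z).re :=
  csInf_le (bddBelow_im σ γ hβ a τ') ⟨z, hz, rfl⟩

lemma le_vDir (hσ : ∀ b, σ b ≠ []) {a : A} {τ' : ℂ} {v : ℝ}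
    (h : ∀ z ∈ Frac σ β γ a, v ≤ (τ' * z).re) : v ≤ vDir σ β γ a τ' :=
  le_csInf ((frac_nonempty σ γ hσ a).image _) (by rintro w ⟨z, hz, rfl⟩; exact h z hz)

end Aux
end IEMWandering
namespace IEMWandering
namespace Aux2
open IEMWandering.Aux

variable {A : Type} [Fintype A] [DecidableEq A]
variable (σ : A → List A) (β : ℂ) (γ : A → ℂ)

lemma finite_decomps : {d : Triple A | ∃ b : A, IsDecomp σ b d}.Finite := by
  have hsub : {d : Triple A | ∃ b : A, IsDecomp σ b d} ⊆
      Set.range (fun p : (Σ b : A, Fin (σ b).length) =>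
        (((σ p.1).take p.2.val, (σ p.1).get p.2, (σ p.1).drop (p.2.val + 1)) : Triple A)) := by
    rintro ⟨p, c, s⟩ ⟨b, hb⟩
    have hb' : σ b = p ++ c :: s := hb
    have hlen : p.length < (σ b).length := by
      rw [hb', List.length_append, List.length_cons]; omega
    refine ⟨⟨b, ⟨p.length, hlen⟩⟩, ?_⟩
    have h1 : (σ b).take p.length = p := by
      rw [hb']; exact List.take_left (l₁ := p) (l₂ := c :: s)
    have h2 : (σ b).get ⟨p.length, hlen⟩ = c := by
      have h2' : (σ b)[p.length]? = some c := by
        rw [hb', List.getElem?_append_right (le_refl p.length)]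
        simp
      have h2'' : (σ b)[p.length]? = some ((σ b).get ⟨p.length, hlen⟩) := by
        rw [List.get_eq_getElem]
        exact List.getElem?_eq_getElem hlen
      rw [h2''] at h2'
      exact Option.some.inj h2'
    have h3 : (σ b).drop (p.length + 1) = s := by
      have : σ b = (p ++ [c]) ++ s := by rw [hb']; simp
      rw [this]
      have hl : (p ++ [c]).length = p.length + 1 := by simp
      rw [← hl]
      exact List.drop_left (l₁ := p ++ [c]) (l₂ := s)
    simp only
    rw [h1, h2, h3]
  exact Set.Finite.subset (Set.finite_range _) hsub

lemma ulimit (hσ : ∀ b, σ b ≠ []) (U : Ultrafilter ℕ) (aa : ℕ → A) (xx : ℕ → ℕ → Triple A)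
    (hxx : ∀ k, InS σ (aa k) (xx k)) :
    ∃ (a : A) (x : ℕ → Triple A), InS σ a x ∧
      ∀ n : ℕ, {k | aa k = a ∧ ∀ m < n, xx k m = x m} ∈ U := by
  obtain ⟨a, -, ha⟩ : ∃ a ∈ (Set.univ : Set A), U.map aa = pure a :=
    Ultrafilter.eq_pure_of_finite_mem Set.finite_univ Filter.univ_mem
  have hA : {k | aa k = a} ∈ U := by
    have h1 : {b : A | b = a} ∈ (pure a : Ultrafilter A) := rfl
    rw [← ha] at h1
    exact h1
  have hcoord : ∀ n : ℕ, ∃ d : Triple A, {k | xx k n = d} ∈ U := by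
    intro n
    have hmem : {d : Triple A | ∃ b : A, IsDecomp σ b d} ∈ U.map (fun k => xx k n) := by
      rw [Ultrafilter.mem_map]
      exact Filter.univ_mem' fun k => InS_decomp σ (hxx k) n
    obtain ⟨d, -, hd⟩ := Ultrafilter.eq_pure_of_finite_mem (finite_decomps σ) hmem
    refine ⟨d, ?_⟩
    have h1 : {e : Triple A | e = d} ∈ (pure d : Ultrafilter (Triple A)) := rfl
    rw [← hd] at h1
    exact h1
  choose x hx using hcoord
  have hS : ∀ n : ℕ, {k | aa k = a ∧ ∀ m < n, xx k m = x m} ∈ U := by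
    intro n
    induction n with
    | zero => simpa using hA
    | succ n ih =>
      have h2 := Filter.inter_mem ih (hx n)
      apply Filter.mem_of_superset h2
      rintro k ⟨⟨hk1, hk2⟩, hk3⟩
      refine ⟨hk1, fun m hm => ?_⟩
      rcases Nat.lt_succ_iff_lt_or_eq.mp hm with h | h
      · exact hk2 m h
      · rw [h]; exact hk3
  refine ⟨a, x, ⟨?_, ?_⟩, hS⟩
  · obtain ⟨k, hk1, hk2⟩ := Ultrafilter.nonempty_of_mem (hS 1)
    have h0 : xx k 0 = x 0 := hk2 0 one_pos
    rw [← h0, ← hk1]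
    exact (hxx k).1
  · intro m
    obtain ⟨k, hk1, hk2⟩ := Ultrafilter.nonempty_of_mem (hS (m+2))
    have h1 : xx k m = x m := hk2 m (by omega)
    have h2 : xx k (m+1) = x (m+1) := hk2 (m+1) (by omega)
    rw [← h1, ← h2]
    exact (hxx k).2 m

lemma ulimit_re_le (hβ : 1 < ‖β‖) (U : Ultrafilter ℕ)
    {aa : ℕ → A} {xx : ℕ → ℕ → Triple A} (hxx : ∀ k, InS σ (aa k) (xx k))
    {a : A} {x : ℕ → Triple A} (hx : InS σ a x)
    (hS : ∀ n : ℕ, {k | aa k = a ∧ ∀ m < n, xx k m = x m} ∈ U)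
    {τ' : ℂ} {v : ℝ} (hval : {k | (τ' * zrep β γ (xx k)).re ≤ v} ∈ U) :
    (τ' * zrep β γ x).re ≤ v := by
  refine le_of_forall_pos_le_add fun ε hε => ?_
  set D : ℝ := ‖τ'‖ * (2 * Cbig σ β γ) + 1 with hD
  have hD0 : 0 < D := by
    have h1 : 0 ≤ ‖τ'‖ * (2 * Cbig σ β γ) :=
      mul_nonneg (norm_nonneg _) (by have := Cbig_nonneg σ γ hβ; linarith)
    linarith
  obtain ⟨n, hn⟩ := exists_pow_lt_of_lt_one (div_pos hε hD0) (rβ_lt_one hβ)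
  obtain ⟨k, ⟨hk1, hk2⟩, hk3⟩ := Ultrafilter.nonempty_of_mem (Filter.inter_mem (hS n) hval)
  have hk3' : (τ' * zrep β γ (xx k)).re ≤ v := hk3
  have hagree : zrepN β γ n (xx k) = zrepN β γ n x :=
    Finset.sum_congr rfl fun m hm => by rw [hk2 m (Finset.mem_range.mp hm)]
  have h1 := zrep_sub_zrepN σ γ hβ (hxx k) n
  have h2 := zrep_sub_zrepN σ γ hβ hx n
  have hdiff : ‖zrep β γ x - zrep β γ (xx k)‖ ≤ 2 * Cbig σ β γ * rβ β ^ n := by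
    have heq : zrep β γ x - zrep β γ (xx k)
        = (zrep β γ x - zrepN β γ n x) - (zrep β γ (xx k) - zrepN β γ n (xx k)) := by
      rw [hagree]; ring
    calc ‖zrep β γ x - zrep β γ (xx k)‖
        ≤ ‖zrep β γ x - zrepN β γ n x‖
          + ‖zrep β γ (xx k) - zrepN β γ n (xx k)‖ := by
          rw [heq, sub_eq_add_neg]
          refine le_trans (norm_add_le _ _) ?_
          rw [norm_neg]
      _ ≤ 2 * Cbig σ β γ * rβ β ^ n := by linarith
  have hre : (τ' * zrep β γ x).re
      = (τ' * zrep β γ (xx k)).re + (τ' * (zrep β γ x - zrep β γ (xx k))).re := by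
    have : τ' * zrep β γ x = τ' * zrep β γ (xx k) + τ' * (zrep β γ x - zrep β γ (xx k)) := by
      ring
    rw [this, Complex.add_re]
  have hre2 : (τ' * (zrep β γ x - zrep β γ (xx k))).re
      ≤ ‖τ'‖ * (2 * Cbig σ β γ * rβ β ^ n) := by
    calc (τ' * (zrep β γ x - zrep β γ (xx k))).re
        ≤ ‖τ' * (zrep β γ x - zrep β γ (xx k))‖ := Complex.re_le_norm _
      _ = ‖τ'‖ * ‖zrep β γ x - zrep β γ (xx k)‖ := norm_mul _ _
      _ ≤ ‖τ'‖ * (2 * Cbig σ β γ * rβ β ^ n) :=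
          mul_le_mul_of_nonneg_left hdiff (norm_nonneg _)
  have hfin : ‖τ'‖ * (2 * Cbig σ β γ * rβ β ^ n) < ε := by
    have hpow0 : 0 ≤ rβ β ^ n := pow_nonneg rβ_nonneg n
    have hstep : ‖τ'‖ * (2 * Cbig σ β γ * rβ β ^ n) ≤ D * rβ β ^ n := by
      have : ‖τ'‖ * (2 * Cbig σ β γ) ≤ D := by rw [hD]; linarith
      calc ‖τ'‖ * (2 * Cbig σ β γ * rβ β ^ n)
          = (‖τ'‖ * (2 * Cbig σ β γ)) * rβ β ^ n := by ring
        _ ≤ D * rβ β ^ n := mul_le_mul_of_nonneg_right this hpow0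
    have : D * rβ β ^ n < D * (ε / D) := by
      exact mul_lt_mul_of_pos_left hn hD0
    rw [mul_div_cancel₀ _ (ne_of_gt hD0)] at this
    linarith
  linarith

lemma re_dir (hβ : 1 < ‖β‖) (j : ℕ) (τ z : ℂ) :
    ((unitDir β ^ j * τ) * (β⁻¹ ^ j * z)).re = rβ β ^ j * (τ * z).re := by
  have habs0 : ‖β‖ ≠ 0 := ne_of_gt (lt_trans one_pos hβ)
  have hb0 : β ≠ 0 := by simpa using habs0
  have habs : (‖β‖ : ℂ) ≠ 0 := by
    simp only [ne_eq, Complex.ofReal_eq_zero]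
    exact habs0
  have key : unitDir β * β⁻¹ = ((rβ β : ℝ) : ℂ) := by
    rw [unitDir, rβ, Complex.ofReal_inv]
    field_simp
  have h1 : (unitDir β ^ j * τ) * (β⁻¹ ^ j * z) = (unitDir β * β⁻¹) ^ j * (τ * z) := by
    rw [mul_pow]; ring
  rw [h1, key, ← Complex.ofReal_pow, Complex.re_ofReal_mul]

end Aux2
end IEMWandering
namespace IEMWandering
namespace Aux3
open IEMWandering.Aux IEMWandering.Aux2

variable {A : Type} [Fintype A] [DecidableEq A]
variable (σ : A → List A) (β : ℂ) (γ : A → ℂ)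

lemma zrepN_splice (j : ℕ) (w x : ℕ → Triple A) :
    zrepN β γ j (splice j w x) = zrepN β γ j w :=
  Finset.sum_congr rfl fun m hm => by
    have h : splice j w x m = w m := if_pos (Finset.mem_range.mp hm)
    rw [h]

variable {β}

lemma zrep_splice (hβ : 1 < ‖β‖) {b : A} {w x : ℕ → Triple A} {j : ℕ}
    (hs : InS σ b (splice j w x)) :
    zrep β γ (splice j w x) = zrepN β γ j w + β⁻¹ ^ j * zrep β γ x := by
  rw [zrep_eq_add σ γ hβ hs j, zrepN_splice, shiftn_splice]

lemma shift_extreme (hσ : ∀ c, σ c ≠ []) (hβ : 1 < ‖β‖)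
    {b : A} {y : ℕ → Triple A} {τ' : ℂ} (hy : InS σ b y)
    (hext : ((unitDir β * τ') * zrep β γ y).re = vDir σ β γ b (unitDir β * τ')) :
    ((τ') * zrep β γ (shiftn 1 y)).re = vDir σ β γ ((y 0).2.1) τ' := by
  have hsy : InS σ ((y 0).2.1) (shiftn 1 y) := shiftn_InS σ hy 1
  have hdir : ∀ z : ℂ, ((unitDir β * τ') * (β⁻¹ ^ 1 * z)).re = rβ β * (τ' * z).re := by
    intro z
    simpa [pow_one] using re_dir (β := β) hβ 1 τ' z
  refine le_antisymm ?_ (vDir_le σ γ hβ (mem_frac σ γ hsy))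
  apply le_vDir σ γ hσ
  rintro z ⟨x', hx', rfl⟩
  have hsp : InS σ b (splice 1 y x') := splice_InS σ le_rfl hy hx' rfl
  have h3 : ((unitDir β * τ') * zrep β γ y).re
      ≤ ((unitDir β * τ') * zrep β γ (splice 1 y x')).re := by
    rw [hext]; exact vDir_le σ γ hβ (mem_frac σ γ hsp)
  have e1 : zrep β γ (splice 1 y x') = zrepN β γ 1 y + β⁻¹ ^ 1 * zrep β γ x' :=
    zrep_splice σ γ hβ hsp
  have e2 : zrep β γ y = zrepN β γ 1 y + β⁻¹ ^ 1 * zrep β γ (shiftn 1 y) :=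
    zrep_eq_add σ γ hβ hy 1
  rw [e1, e2] at h3
  simp only [mul_add, Complex.add_re] at h3
  rw [hdir (zrep β γ (shiftn 1 y)), hdir (zrep β γ x')] at h3
  have hr := rβ_pos (β := β) hβ
  nlinarith

lemma shiftn_extreme (hσ : ∀ c, σ c ≠ []) (hβ : 1 < ‖β‖)
    {b : A} {y : ℕ → Triple A} {τ : ℂ} {j : ℕ} (hy : InS σ b y)
    (hext : ((unitDir β ^ j * τ) * zrep β γ y).re = vDir σ β γ b (unitDir β ^ j * τ)) :
    ∀ i, i ≤ j → ((unitDir β ^ (j - i) * τ) * zrep β γ (shiftn i y)).re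
      = vDir σ β γ (letterAt b y i) (unitDir β ^ (j - i) * τ) := by
  intro i
  induction i with
  | zero => intro _; exact hext
  | succ i ih =>
    intro hij
    have h1 := ih (by omega)
    have hkey : unitDir β ^ (j - i) * τ = unitDir β * (unitDir β ^ (j - (i+1)) * τ) := by
      rw [← mul_assoc, ← pow_succ']
      congr 2
      omega
    rw [hkey] at h1
    have h2 := shift_extreme σ γ hσ hβ (shiftn_InS σ hy i) h1
    have e : shiftn 1 (shiftn i y) = shiftn (i+1) y := by
      funext m
      show y (m + 1 + i) = y (m + (i + 1))
      congr 1
      omega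
    have e2 : ((shiftn i y) 0).2.1 = (y i).2.1 := by
      show (y (0 + i)).2.1 = (y i).2.1
      rw [Nat.zero_add]
    rw [e, e2] at h2
    exact h2

lemma exists_extreme (hσ : ∀ c, σ c ≠ []) (hβ : 1 < ‖β‖) (b : A) (τ' : ℂ) :
    ∃ x : ℕ → Triple A, InS σ b x ∧ (τ' * zrep β γ x).re = vDir σ β γ b τ' := by
  have hne : ((fun z => (τ' * z).re) '' Frac σ β γ b).Nonempty :=
    (frac_nonempty σ γ hσ b).image _
  have key : ∀ k : ℕ, ∃ x, InS σ b x
      ∧ (τ' * zrep β γ x).re < vDir σ β γ b τ' + 1/(k+1) := by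
    intro k
    have hpos : (0:ℝ) < 1/(k+1) := by positivity
    obtain ⟨w, hw, hlt⟩ := exists_lt_of_csInf_lt hne (lt_add_of_pos_right _ hpos)
    obtain ⟨z, ⟨x, hx, rfl⟩, rfl⟩ := hw
    exact ⟨x, hx, hlt⟩
  choose xx hxx hlt using key
  set U := Ultrafilter.of (Filter.atTop : Filter ℕ) with hU
  have hUle : (U : Filter ℕ) ≤ Filter.atTop := Ultrafilter.of_le _
  obtain ⟨a, x, hx, hS⟩ := ulimit σ hσ U (fun _ => b) xx hxx
  have hab : a = b := by
    obtain ⟨k, hk⟩ := Ultrafilter.nonempty_of_mem (hS 0)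
    exact hk.1.symm
  subst hab
  refine ⟨x, hx, le_antisymm ?_ (vDir_le σ γ hβ (mem_frac σ γ hx))⟩
  refine le_of_forall_pos_le_add fun ε hε => ?_
  apply ulimit_re_le σ β γ hβ U hxx hx hS
  obtain ⟨N, hN⟩ := exists_nat_one_div_lt hε
  apply Filter.mem_of_superset (hUle (Filter.Ici_mem_atTop N))
  intro k hk
  have hk' : (N:ℝ) + 1 ≤ (k:ℝ) + 1 := by
    have : N ≤ k := hk
    exact_mod_cast Nat.succ_le_succ this
  have h1 : (1:ℝ)/(k+1) ≤ 1/(N+1) := by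
    apply one_div_le_one_div_of_le
    · positivity
    · exact hk'
  have h2 := hlt k
  simp only [Set.mem_setOf_eq]
  linarith

end Aux3
end IEMWandering

open IEMWandering IEMWandering.Aux IEMWandering.Aux2 IEMWandering.Aux3 in
/-- **Corollary 5.11.** (i) For every `τ ∈ S¹` there is `a ∈ 𝒜` with `E_a^*(τ) ≠ ∅`.
(ii) If `E_a^*(τ) ≠ ∅` for some `a ∈ 𝒜`, `τ ∈ S¹`, then `E_a^*(τ) = E_a(τ)`. -/
theorem limitExtreme {A : Type} [Fintype A] [DecidableEq A]
    (T : IEMWandering.SelfSimilarIEM A) (β : ℂ) (γ : A → ℂ)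
    (hβ : 1 < ‖β‖)
    (hβ0 : IEMWandering.NotRootOfUnity (IEMWandering.unitDir β))
    (hγ : IEMWandering.IsEigenvector T.σ β γ) :
    (∀ τ : ℂ, ‖τ‖ = 1 →
      ∃ a : A, (IEMWandering.LimitExt T.σ β γ a τ).Nonempty) ∧
    (∀ (a : A) (τ : ℂ), ‖τ‖ = 1 →
      (IEMWandering.LimitExt T.σ β γ a τ).Nonempty →
      IEMWandering.LimitExt T.σ β γ a τ = IEMWandering.ExtPts T.σ β γ a τ) := by
  classical
  have hA : Nonempty A := by
    by_contra h
    rw [not_nonempty_iff] at h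
    exact hγ.1 (funext fun a => isEmptyElim a)
  have hσ : ∀ b, T.σ b ≠ [] := T.σ_ne
  constructor
  · -- part (i)
    intro τ hτ
    obtain ⟨a₀⟩ := hA
    have hE : ∀ k : ℕ, ∃ y : ℕ → Triple A, InS T.σ a₀ y ∧
        ((unitDir β ^ k * τ) * zrep β γ y).re = vDir T.σ β γ a₀ (unitDir β ^ k * τ) :=
      fun k => exists_extreme T.σ γ hσ hβ a₀ (unitDir β ^ k * τ)
    choose Y hY1 hY2 using hE
    have hUle : ((Ultrafilter.of (Filter.atTop : Filter ℕ)) : Filter ℕ) ≤ Filter.atTop :=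
      Ultrafilter.of_le _
    obtain ⟨a, x, hx, hS⟩ := ulimit T.σ hσ (Ultrafilter.of Filter.atTop)
      (fun k => letterAt a₀ (Y k) k) (fun k => shiftn k (Y k))
      (fun k => shiftn_InS T.σ (hY1 k) k)
    have hxxext : ∀ k : ℕ, (τ * zrep β γ (shiftn k (Y k))).re
        = vDir T.σ β γ (letterAt a₀ (Y k) k) τ := by
      intro k
      have h := shiftn_extreme T.σ γ hσ hβ (hY1 k) (hY2 k) k le_rfl
      rw [Nat.sub_self, pow_zero, one_mul] at h
      exact h
    have hcA : {k : ℕ | letterAt a₀ (Y k) k = a} ∈ Ultrafilter.of (Filter.atTop : Filter ℕ) := by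
      simpa using hS 0
    have hxext : (τ * zrep β γ x).re = vDir T.σ β γ a τ := by
      refine le_antisymm ?_ (vDir_le T.σ γ hβ (mem_frac T.σ γ hx))
      apply ulimit_re_le T.σ β γ hβ (Ultrafilter.of Filter.atTop)
        (fun k => shiftn_InS T.σ (hY1 k) k) hx hS
      apply Filter.mem_of_superset hcA
      intro k hk
      simp only [Set.mem_setOf_eq]
      have hk' : letterAt a₀ (Y k) k = a := hk
      rw [hxxext k, hk']
    refine ⟨a, zrep β γ x, ⟨mem_frac T.σ γ hx, hxext⟩, x, hx, rfl, ?_⟩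
    intro j hj
    have hkset : {k : ℕ | letterAt a₀ (Y k) k = a} ∩ Set.Ici (max 1 j)
        ∈ Ultrafilter.of (Filter.atTop : Filter ℕ) :=
      Filter.inter_mem hcA (hUle (Filter.Ici_mem_atTop _))
    obtain ⟨k, hck, hkge⟩ := Ultrafilter.nonempty_of_mem hkset
    have hck' : letterAt a₀ (Y k) k = a := hck
    have hjk : j ≤ k := le_trans (le_max_right 1 j) hkge
    have hk1 : 1 ≤ k := le_trans (le_max_left 1 j) hkge
    have hwInS : InS T.σ (letterAt a₀ (Y k) (k - j)) (shiftn (k - j) (Y k)) :=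
      shiftn_InS T.σ (hY1 k) (k - j)
    have hwext : ((unitDir β ^ j * τ) * zrep β γ (shiftn (k - j) (Y k))).re
        = vDir T.σ β γ (letterAt a₀ (Y k) (k - j)) (unitDir β ^ j * τ) := by
      have h := shiftn_extreme T.σ γ hσ hβ (hY1 k) (hY2 k) (k - j) (Nat.sub_le k j)
      rw [show k - (k - j) = j from by omega] at h
      exact h
    have hcw : ((shiftn (k - j) (Y k)) (j - 1)).2.1 = a := by
      show (Y k ((j - 1) + (k - j))).2.1 = a
      rw [show (j - 1) + (k - j) = k - 1 from by omega]
      obtain ⟨k', hk'⟩ : ∃ k', k = k' + 1 := ⟨k - 1, by omega⟩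
      subst hk'
      have h2 : letterAt a₀ (Y (k' + 1)) (k' + 1) = (Y (k' + 1) k').2.1 := rfl
      rw [show k' + 1 - 1 = k' from rfl, ← h2]
      exact hck'
    have hyjInS : InS T.σ (letterAt a₀ (Y k) (k - j)) (splice j (shiftn (k - j) (Y k)) x) :=
      splice_InS T.σ hj hwInS hx hcw
    refine ⟨letterAt a₀ (Y k) (k - j), splice j (shiftn (k - j) (Y k)) x, hyjInS,
      ⟨mem_frac T.σ γ hyjInS, ?_⟩, ?_, ?_⟩
    · have e1 : zrep β γ (splice j (shiftn (k - j) (Y k)) x)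
          = zrepN β γ j (shiftn (k - j) (Y k)) + β⁻¹ ^ j * zrep β γ x :=
        zrep_splice T.σ γ hβ hyjInS
      have e2 : zrep β γ (shiftn (k - j) (Y k))
          = zrepN β γ j (shiftn (k - j) (Y k)) + β⁻¹ ^ j * zrep β γ (shiftn j (shiftn (k - j) (Y k))) :=
        zrep_eq_add T.σ γ hβ hwInS j
      have e3 : shiftn j (shiftn (k - j) (Y k)) = shiftn k (Y k) := by
        funext m
        show Y k (m + j + (k - j)) = Y k (m + k)
        congr 1
        omega
      have hre : ((unitDir β ^ j * τ) * zrep β γ (splice j (shiftn (k - j) (Y k)) x)).re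
          = ((unitDir β ^ j * τ) * zrep β γ (shiftn (k - j) (Y k))).re := by
        rw [e1, e2, e3]
        simp only [mul_add, Complex.add_re]
        congr 1
        rw [re_dir β hβ j τ (zrep β γ x), re_dir β hβ j τ (zrep β γ (shiftn k (Y k)))]
        rw [hxext, hxxext k, hck']
      rw [hre, hwext]
    · show ((splice j (shiftn (k - j) (Y k)) x) (j - 1)).2.1 = a
      have h : splice j (shiftn (k - j) (Y k)) x (j - 1) = (shiftn (k - j) (Y k)) (j - 1) :=
        if_pos (by omega)
      rw [h]
      exact hcw
    · exact shiftn_splice j (shiftn (k - j) (Y k)) x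
  · -- part (ii)
    intro a τ hτ hne
    obtain ⟨zstar, hzext, xs, hxs, hzxs, hwit⟩ := hne
    apply Set.Subset.antisymm
    · intro z hz
      exact hz.1
    · intro z hz
      obtain ⟨x', hx', hzx'⟩ := hz.1
      refine ⟨hz, x', hx', hzx', ?_⟩
      intro j hj
      obtain ⟨aj, y, hy, hyext, hyc, hytail⟩ := hwit j hj
      have hsp : InS T.σ aj (splice j y x') := splice_InS T.σ hj hy hx' hyc
      refine ⟨aj, splice j y x', hsp, ⟨mem_frac T.σ γ hsp, ?_⟩, ?_, ?_⟩
      · have e1 : zrep β γ (splice j y x') = zrepN β γ j y + β⁻¹ ^ j * zrep β γ x' :=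
          zrep_splice T.σ γ hβ hsp
        have e2 : zrep β γ y = zrepN β γ j y + β⁻¹ ^ j * zrep β γ xs := by
          have h := zrep_eq_add T.σ γ hβ hy j
          rw [show shiftn j y = xs from hytail] at h
          exact h
        have hre : ((unitDir β ^ j * τ) * zrep β γ (splice j y x')).re
            = ((unitDir β ^ j * τ) * zrep β γ y).re := by
          rw [e1, e2]
          simp only [mul_add, Complex.add_re]
          congr 1
          rw [re_dir β hβ j τ (zrep β γ x'), re_dir β hβ j τ (zrep β γ xs)]
          congr 1
          rw [hzx', hzxs, hz.2, hzext.2]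
        rw [hre]
        exact hyext.2
      · show ((splice j y x') (j - 1)).2.1 = a
        have h : splice j y x' (j - 1) = y (j - 1) := if_pos (by omega)
        rw [h]
        exact hyc
      · exact shiftn_splice j y x'
end
end
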